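/- For B, F with finite Haar expansion, π_B* π_F = π_{Δ(B,F)} + (π_{Δ(F,B)})* + D_{B,F}, where Δ(B,F) = Σ_J B_J* F_J χ_J/|J| and D_{B,F}(h_I ⊗ x) = h_I (1/|I|) Σ_{J⊊I} B_J* F_J x; moreover ‖D_{B,F}‖ ≤ sup_{‖e‖=1}‖B_e‖_{BMO(H)} · sup_{‖e‖=1}‖F_e‖_{BMO(H)}. -/

import Mathlib

open MeasureTheory ENNReal ContinuousLinearMap
open scoped Classical NNReal

noncomputable section

/-- A dyadic subinterval of the unit circle `[0,1)`, given by generation `n`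
and position `k < 2 ^ n`; it represents `[k/2^n, (k+1)/2^n)`. -/
structure DyadicInterval where
  n : ℕ
  k : ℕ
  hk : k < 2 ^ n

namespace DyadicInterval

/-- The underlying set of a dyadic interval. -/
def set (I : DyadicInterval) : Set ℝ :=
  Set.Ico ((I.k : ℝ) / 2 ^ I.n) (((I.k : ℝ) + 1) / 2 ^ I.n)

/-- The length `|I|` of a dyadic interval. -/
def len (I : DyadicInterval) : ℝ := ((2 : ℝ) ^ I.n)⁻¹

/-- The left half `I⁺`. -/
def left (I : DyadicInterval) : DyadicInterval :=
  ⟨I.n + 1, 2 * I.k, by have := I.hk; omega⟩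

/-- The right half `I⁻`. -/
def right (I : DyadicInterval) : DyadicInterval :=
  ⟨I.n + 1, 2 * I.k + 1, by have := I.hk; omega⟩

/-- The indicator function `χ_I`. -/
def ind (I : DyadicInterval) : ℝ → ℝ := Set.indicator I.set fun _ => (1 : ℝ)

/-- The Haar function `h_I = |I|^{-1/2} (χ_{I⁺} - χ_{I⁻})`. -/
def haar (I : DyadicInterval) : ℝ → ℝ :=
  fun t => (Real.sqrt I.len)⁻¹ * (I.left.ind t - I.right.ind t)

end DyadicInterval

/-- Normalized Lebesgue measure on the circle, realized as `[0,1) ⊆ ℝ`. -/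
def circleMeasure : Measure ℝ := volume.restrict (Set.Ico (0 : ℝ) 1)

/-- Haar coefficient `f_I = ∫ f h_I`. -/
def haarCoeff {E : Type*} [NormedAddCommGroup E] [NormedSpace ℝ E]
    (f : ℝ → E) (I : DyadicInterval) : E :=
  ∫ t, I.haar t • f t ∂circleMeasure

/-- Average `m_I f = |I|⁻¹ ∫_I f`. -/
def avg {E : Type*} [NormedAddCommGroup E] [NormedSpace ℝ E]
    (f : ℝ → E) (I : DyadicInterval) : E :=
  I.len⁻¹ • ∫ t in I.set, f t

variable {H : Type*} [NormedAddCommGroup H] [InnerProductSpace ℂ H] [CompleteSpace H]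

/-- An operator-valued function with finite formal Haar expansion is recorded by its
finitely supported family of Haar coefficients `B_I ∈ L(H)`. -/
abbrev OpCoeffs (H : Type*) [NormedAddCommGroup H] [InnerProductSpace ℂ H] :=
  DyadicInterval →₀ (H →L[ℂ] H)

/-- The function `B = ∑_I h_I B_I`. -/
def Bfun (b : OpCoeffs H) : ℝ → (H →L[ℂ] H) :=
  fun t => ∑ I ∈ b.support, I.haar t • b I

/-- The dyadic paraproduct `π_B f = ∑_I B_I (m_I f) h_I`. -/
def para (b : OpCoeffs H) (f : ℝ → H) : ℝ → H :=
  fun t => ∑ I ∈ b.support, I.haar t • (b I) (avg f I)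

/-- The operator `Δ_B f = ∑_I B_I (f_I) χ_I / |I|`. -/
def delta (b : OpCoeffs H) (f : ℝ → H) : ℝ → H :=
  fun t => ∑ I ∈ b.support, (I.len⁻¹ * I.ind t) • (b I) (haarCoeff f I)

/-- The Haar projection `P_I B = ∑_{J ⊆ I} h_J B_J` for `B` with finite Haar expansion. -/
def PIB (b : OpCoeffs H) (I : DyadicInterval) : ℝ → (H →L[ℂ] H) :=
  fun t => ∑ J ∈ b.support.filter fun J => J.set ⊆ I.set, J.haar t • b J

/-- The Haar projection `P_I G = ∑_{J ⊆ I} h_J G_J` for a general operator-valued `G`. -/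
def PIBF (G : ℝ → (H →L[ℂ] H)) (I : DyadicInterval) : ℝ → (H →L[ℂ] H) :=
  fun t => ∑' J : {J : DyadicInterval // J.set ⊆ I.set}, (J : DyadicInterval).haar t • haarCoeff G J

/-- The multiplier `Λ_B f = ∑_I (P_I B)(f_I) h_I`. -/
def Lambda (b : OpCoeffs H) (f : ℝ → H) : ℝ → H :=
  fun t => ∑' I : DyadicInterval, I.haar t • (PIB b I t) (haarCoeff f I)

/-- The multiplier `Λ_G f = ∑_I (P_I G)(f_I) h_I` for a general symbol `G`. -/
def LambdaF (G : ℝ → (H →L[ℂ] H)) (f : ℝ → H) : ℝ → H :=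
  fun t => ∑' I : DyadicInterval, I.haar t • (PIBF G I t) (haarCoeff f I)

/-- The paraproduct `π_G f = ∑_I G_I (m_I f) h_I` for a general symbol `G`. -/
def paraF (G : ℝ → (H →L[ℂ] H)) (f : ℝ → H) : ℝ → H :=
  fun t => ∑' I : DyadicInterval, I.haar t • (haarCoeff G I) (avg f I)

/-- The adjoint `π_G^* f = ∑_I G_I^* (f_I) χ_I/|I|` of the paraproduct with symbol `G`. -/
def paraStarF (G : ℝ → (H →L[ℂ] H)) (f : ℝ → H) : ℝ → H :=
  fun t => ∑' I : DyadicInterval,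
    (I.len⁻¹ * I.ind t) • (ContinuousLinearMap.adjoint (haarCoeff G I)) (haarCoeff f I)

/-- The coefficients of `B^*`, i.e. `I ↦ B_I^*`. -/
def adjC (b : OpCoeffs H) : OpCoeffs H :=
  b.mapRange (fun A => ContinuousLinearMap.adjoint A) (by simp)

/-- The sweep `S_B = ∑_I B_I^* B_I χ_I / |I|`. -/
def sweep (b : OpCoeffs H) : ℝ → (H →L[ℂ] H) :=
  fun t => ∑ I ∈ b.support,
    (I.len⁻¹ * I.ind t) • (ContinuousLinearMap.adjoint (b I) ∘L b I)

/-- The bilinear sweep `Δ(B,F) = ∑_J B_J^* F_J χ_J / |J|`. -/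
def DeltaBil (b F : OpCoeffs H) : ℝ → (H →L[ℂ] H) :=
  fun t => ∑ J ∈ b.support ∪ F.support,
    (J.len⁻¹ * J.ind t) • (ContinuousLinearMap.adjoint (b J) ∘L F J)

/-- The block diagonal operator `D_B (h_I ⊗ x) = h_I |I|⁻¹ ∑_{J ⊊ I} B_J^* B_J x`. -/
def Dop (b : OpCoeffs H) (f : ℝ → H) : ℝ → H :=
  fun t => ∑' I : DyadicInterval, I.haar t •
    (I.len⁻¹ • ∑ J ∈ b.support.filter fun J => J.set ⊂ I.set,
      (ContinuousLinearMap.adjoint (b J) ∘L b J)) (haarCoeff f I)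

/-- The block diagonal operator `D_{B,F} (h_I ⊗ x) = h_I |I|⁻¹ ∑_{J ⊊ I} B_J^* F_J x`. -/
def DopBil (b F : OpCoeffs H) (f : ℝ → H) : ℝ → H :=
  fun t => ∑' I : DyadicInterval, I.haar t •
    (I.len⁻¹ • ∑ J ∈ (b.support ∪ F.support).filter fun J => J.set ⊂ I.set,
      (ContinuousLinearMap.adjoint (b J) ∘L F J)) (haarCoeff f I)

/-- The operator norm of a map on `L²(𝕋, H)`, where `L²(𝕋,H)` is realized as the
(mean-zero) closed span of the Haar system `f = ∑_I f_I h_I`. -/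
def l2NormOp (T : (ℝ → H) → (ℝ → H)) : ℝ≥0∞ :=
  ⨆ f : {f : ℝ → H // MemLp f 2 circleMeasure ∧ (∫ t, f t ∂circleMeasure) = 0 ∧
      eLpNorm f 2 circleMeasure ≤ 1},
    eLpNorm (T f.1) 2 circleMeasure

/-- The Haar multiplier norm of a family `(Φ_I)_{I ∈ D}`, i.e. the norm of
`ℓ²(D,H) → L²(𝕋,H)`, `(f_I) ↦ ∑_I Φ_I (f_I) h_I`. -/
def multNorm (Φ : DyadicInterval → ℝ → (H →L[ℂ] H)) : ℝ≥0∞ :=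
  ⨆ c : {c : DyadicInterval →₀ H // ∑ I ∈ c.support, ‖c I‖ ^ 2 ≤ 1},
    eLpNorm (fun t => ∑ I ∈ (c : DyadicInterval →₀ H).support,
      I.haar t • (Φ I t) ((c : DyadicInterval →₀ H) I)) 2 circleMeasure

/-- The dyadic BMO norm of a vector-valued function. -/
def bmoNorm {E : Type*} [NormedAddCommGroup E] [NormedSpace ℝ E] (f : ℝ → E) : ℝ≥0∞ :=
  ⨆ I : DyadicInterval,
    ENNReal.ofReal (I.len⁻¹ * ∫ t in I.set, ‖f t - avg f I‖ ^ 2) ^ (1/2 : ℝ)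

/-- The strong BMO norm `‖B‖_{SBMO} = sup_{‖e‖=1} ‖B e‖_{BMO(H)}`. -/
def sbmoNorm (B : ℝ → (H →L[ℂ] H)) : ℝ≥0∞ :=
  ⨆ e : {e : H // ‖e‖ = 1}, bmoNorm fun t => B t e.1

/-- The `BMO_so` norm `‖B‖ = ‖B‖_{SBMO} + ‖B^*‖_{SBMO}`. -/
def bmosoNorm (B : ℝ → (H →L[ℂ] H)) : ℝ≥0∞ :=
  sbmoNorm B + sbmoNorm fun t => ContinuousLinearMap.adjoint (B t)

/-- A family of independent fair random signs `(σ_I)_{I ∈ D}`, modelling the product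
probability space `Σ = {-1,1}^D`. -/
structure SignSpace {Ω : Type*} [MeasurableSpace Ω] (ℙ : Measure Ω)
    (σ : DyadicInterval → Ω → ℝ) : Prop where
  prob : IsProbabilityMeasure ℙ
  meas : ∀ I, Measurable (σ I)
  values : ∀ I, ∀ ω, σ I ω = 1 ∨ σ I ω = -1
  indep : ProbabilityTheory.iIndepFun σ ℙ
  fair : ∀ I, ℙ {ω | σ I ω = 1} = 1/2

end

noncomputable section Aux

namespace DyadicInterval

variable (I J : DyadicInterval)

lemma len_pos : 0 < I.len := by unfold len; positivity

lemma len_nonneg : 0 ≤ I.len := I.len_pos.le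

lemma endpoints_lt : (I.k : ℝ)/2^I.n < ((I.k:ℝ)+1)/2^I.n := by
  apply div_lt_div_of_pos_right ?_ (by positivity)
  · linarith

lemma set_nonempty : I.set.Nonempty := Set.nonempty_Ico.2 I.endpoints_lt

lemma set_subset_Ico : I.set ⊆ Set.Ico (0:ℝ) 1 := by
  apply Set.Ico_subset_Ico
  · positivity
  · rw [div_le_one (by positivity)]
    have := I.hk
    have : (I.k:ℝ) + 1 ≤ (2:ℝ)^I.n := by exact_mod_cast this
    linarith

lemma measurableSet_set : MeasurableSet I.set := measurableSet_Ico

lemma volume_set : volume I.set = ENNReal.ofReal I.len := by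
  rw [set, Real.volume_Ico, len]
  congr 1
  field_simp
  ring

lemma left_set : I.left.set = Set.Ico ((I.k:ℝ)/2^I.n) ((2*(I.k:ℝ)+1)/2^(I.n+1)) := by
  have h1 : ((2*I.k:ℕ):ℝ)/2^(I.n+1) = (I.k:ℝ)/2^I.n := by
    push_cast
    rw [pow_succ, mul_comm 2 (I.k:ℝ), mul_div_mul_right _ _ (two_ne_zero)]
  have h2 : (((2*I.k:ℕ):ℝ)+1)/2^(I.n+1) = (2*(I.k:ℝ)+1)/2^(I.n+1) := by
    push_cast
    try ring_nf
  show Set.Ico (((2*I.k:ℕ):ℝ)/2^(I.n+1)) ((((2*I.k:ℕ):ℝ)+1)/2^(I.n+1)) = _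
  rw [h1, h2]

lemma right_set : I.right.set = Set.Ico ((2*(I.k:ℝ)+1)/2^(I.n+1)) (((I.k:ℝ)+1)/2^I.n) := by
  have h1 : ((2*I.k+1:ℕ):ℝ)/2^(I.n+1) = (2*(I.k:ℝ)+1)/2^(I.n+1) := by
    push_cast
    try ring_nf
  have h2 : (((2*I.k+1:ℕ):ℝ)+1)/2^(I.n+1) = ((I.k:ℝ)+1)/2^I.n := by
    push_cast
    rw [pow_succ, show ((2:ℝ)*I.k+1+1) = ((I.k:ℝ)+1)*2 by ring,
      mul_div_mul_right _ _ (two_ne_zero)]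
  show Set.Ico (((2*I.k+1:ℕ):ℝ)/2^(I.n+1)) ((((2*I.k+1:ℕ):ℝ)+1)/2^(I.n+1)) = _
  rw [h1, h2]

lemma mid_mem : (I.k:ℝ)/2^I.n ≤ (2*(I.k:ℝ)+1)/2^(I.n+1) ∧
    (2*(I.k:ℝ)+1)/2^(I.n+1) ≤ ((I.k:ℝ)+1)/2^I.n := by
  constructor
  · rw [div_le_div_iff₀ (by positivity) (by positivity), pow_succ]
    nlinarith [pow_pos (show (0:ℝ) < 2 by norm_num) I.n]
  · rw [div_le_div_iff₀ (by positivity) (by positivity), pow_succ]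
    nlinarith [pow_pos (show (0:ℝ) < 2 by norm_num) I.n]

lemma left_union_right : I.left.set ∪ I.right.set = I.set := by
  rw [left_set, right_set, Set.Ico_union_Ico_eq_Ico I.mid_mem.1 I.mid_mem.2, set]

lemma disjoint_left_right : Disjoint I.left.set I.right.set := by
  rw [left_set, right_set, Set.Ico_disjoint_Ico]
  simp

lemma left_subset : I.left.set ⊆ I.set := by
  conv_rhs => rw [← left_union_right I]
  exact Set.subset_union_left

lemma right_subset : I.right.set ⊆ I.set := by
  conv_rhs => rw [← left_union_right I]
  exact Set.subset_union_right

/-- Two dyadic intervals with equal sets are equal. -/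
lemma set_inj (h : I.set = J.set) : I = J := by
  rw [set, set] at h
  rw [Set.Ico_eq_Ico_iff (Or.inl I.endpoints_lt)] at h
  obtain ⟨h1, h2⟩ := h
  have hn : I.n = J.n := by
    have hlen : ((I.k:ℝ)+1)/2^I.n - (I.k:ℝ)/2^I.n = ((J.k:ℝ)+1)/2^J.n - (J.k:ℝ)/2^J.n := by
      rw [h1, h2]
    have e1 : ((I.k:ℝ)+1)/2^I.n - (I.k:ℝ)/2^I.n = 1/2^I.n := by ring
    have e2 : ((J.k:ℝ)+1)/2^J.n - (J.k:ℝ)/2^J.n = 1/2^J.n := by ring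
    rw [e1, e2] at hlen
    have h2n : (2:ℝ)^I.n = 2^J.n := by
      rw [div_eq_div_iff (by positivity) (by positivity)] at hlen
      linarith
    have h2n' : (2:ℕ)^I.n = 2^J.n := by exact_mod_cast h2n
    exact Nat.pow_right_injective (le_refl 2) h2n'
  have hkk : I.k = J.k := by
    rw [hn] at h1
    have : (I.k:ℝ) = J.k := by
      field_simp at h1
      exact_mod_cast h1
    exact_mod_cast this
  cases I; cases J; simp_all

end DyadicInterval
namespace DyadicInterval

variable (I J : DyadicInterval)

lemma ext_nk {I J : DyadicInterval} (hn : I.n = J.n) (hk : I.k = J.k) : I = J := by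
  cases I; cases J; simp_all

lemma subset_iff_of_le {I J : DyadicInterval} (h : J.n ≤ I.n) :
    I.set ⊆ J.set ↔ (J.k * 2^(I.n - J.n) ≤ I.k ∧ I.k + 1 ≤ (J.k+1) * 2^(I.n - J.n)) := by
  have hd : I.n = J.n + (I.n - J.n) := by omega
  rw [set, set, Set.Ico_subset_Ico_iff I.endpoints_lt]
  set d := I.n - J.n with hdd
  have hpow : (2:ℝ)^I.n = 2^J.n * 2^d := by rw [hd, pow_add]
  have h2J : (0:ℝ) < 2^J.n := by positivity
  have h2I : (0:ℝ) < 2^I.n := by positivity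
  have h2d : (0:ℝ) < 2^d := by positivity
  constructor
  · rintro ⟨ha, hb⟩
    constructor
    · rw [div_le_div_iff₀ h2J h2I, hpow] at ha
      have : (J.k:ℝ) * 2^d ≤ I.k := by nlinarith
      exact_mod_cast this
    · rw [div_le_div_iff₀ h2I h2J, hpow] at hb
      have : ((I.k:ℝ)+1) ≤ ((J.k:ℝ)+1) * 2^d := by nlinarith
      exact_mod_cast this
  · rintro ⟨ha, hb⟩
    have ha' : (J.k:ℝ) * 2^d ≤ I.k := by exact_mod_cast ha
    have hb' : (I.k:ℝ)+1 ≤ ((J.k:ℝ)+1)*2^d := by exact_mod_cast hb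
    constructor
    · rw [div_le_div_iff₀ h2J h2I, hpow]
      nlinarith
    · rw [div_le_div_iff₀ h2I h2J, hpow]
      nlinarith

lemma n_le_of_subset {I J : DyadicInterval} (h : I.set ⊆ J.set) : J.n ≤ I.n := by
  rw [set, set, Set.Ico_subset_Ico_iff I.endpoints_lt] at h
  obtain ⟨ha, hb⟩ := h
  by_contra hn
  push_neg at hn
  have e1 : ((I.k:ℝ)+1)/2^I.n = I.k/2^I.n + 1/2^I.n := by ring
  have e2 : ((J.k:ℝ)+1)/2^J.n = J.k/2^J.n + 1/2^J.n := by ring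
  have h1 : (1:ℝ)/2^I.n ≤ 1/2^J.n := by linarith
  have h2J : (0:ℝ) < 2^J.n := by positivity
  have h2I : (0:ℝ) < 2^I.n := by positivity
  rw [div_le_div_iff₀ h2I h2J] at h1
  have : (2:ℝ)^J.n ≤ 2^I.n := by linarith
  have : J.n ≤ I.n := by
    have := (pow_le_pow_iff_right₀ (by norm_num : (1:ℝ) < 2)).1 this
    exact this
  omega

/-- The generation-`m` dyadic ancestor of `J`. -/
def ancAt (J : DyadicInterval) (m : ℕ) : DyadicInterval :=
  ⟨m, J.k / 2^(J.n - m), by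
    have hk := J.hk
    have hpos : 0 < 2^(J.n - m) := pow_pos (by norm_num) _
    rw [Nat.div_lt_iff_lt_mul hpos]
    calc J.k < 2^J.n := hk
    _ ≤ 2^(m + (J.n - m)) := Nat.pow_le_pow_right (by norm_num) (by omega)
    _ = 2^m * 2^(J.n-m) := pow_add 2 m _⟩

lemma subset_ancAt (J : DyadicInterval) (m : ℕ) (hm : m ≤ J.n) :
    J.set ⊆ (ancAt J m).set := by
  rw [subset_iff_of_le (show (ancAt J m).n ≤ J.n from hm)]
  show J.k / 2^(J.n - m) * 2 ^ (J.n - m) ≤ J.k ∧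
    J.k + 1 ≤ (J.k / 2^(J.n - m) + 1) * 2 ^ (J.n - m)
  have hpos : 0 < 2^(J.n - m) := pow_pos (by norm_num) _
  have hdm := Nat.div_add_mod J.k (2^(J.n - m))
  have hml := Nat.mod_lt J.k hpos
  constructor
  · exact Nat.div_mul_le_self _ _
  · calc J.k + 1 = 2^(J.n-m) * (J.k/2^(J.n-m)) + J.k % 2^(J.n-m) + 1 := by omega
    _ ≤ 2^(J.n-m) * (J.k/2^(J.n-m)) + 2^(J.n-m) := by omega
    _ = (J.k / 2^(J.n - m) + 1) * 2 ^ (J.n - m) := by ring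

lemma eq_ancAt_of_subset {I J : DyadicInterval} (h : J.set ⊆ I.set) : I = ancAt J I.n := by
  have hn := n_le_of_subset h
  rw [subset_iff_of_le hn] at h
  have hpos : 0 < 2^(J.n - I.n) := pow_pos (by norm_num) _
  have hc1 : I.k ≤ J.k / 2^(J.n-I.n) := (Nat.le_div_iff_mul_le hpos).2 h.1
  have hc2 : J.k / 2^(J.n-I.n) < I.k + 1 := (Nat.div_lt_iff_lt_mul hpos).2 (by
    have := h.2; nlinarith)
  exact ext_nk rfl (by show I.k = J.k / 2^(J.n - I.n); omega)

lemma same_gen_disjoint {I J : DyadicInterval} (h : I.n = J.n) (hk : I.k ≠ J.k) :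
    Disjoint I.set J.set := by
  rw [set, set, Set.Ico_disjoint_Ico]
  rcases Nat.lt_or_ge I.k J.k with hlt | hge
  · apply le_trans (min_le_left _ _)
    apply le_trans ?_ (le_max_right _ _)
    rw [h]
    apply div_le_div_of_nonneg_right ?_ (by positivity)
    · have : (I.k:ℝ) + 1 ≤ J.k := by exact_mod_cast hlt
      linarith
  · have hlt : J.k < I.k := by omega
    apply le_trans (min_le_right _ _)
    apply le_trans ?_ (le_max_left _ _)
    rw [h]
    apply div_le_div_of_nonneg_right ?_ (by positivity)
    · have : (J.k:ℝ) + 1 ≤ I.k := by exact_mod_cast hlt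
      linarith

lemma subset_or_disjoint_of_le {I J : DyadicInterval} (h : J.n ≤ I.n) :
    I.set ⊆ J.set ∨ Disjoint I.set J.set := by
  by_cases hk : J.k = (ancAt I J.n).k
  · left
    have := subset_ancAt I J.n h
    have he : J = ancAt I J.n := ext_nk rfl hk
    rw [he]; exact this
  · right
    exact (same_gen_disjoint (show (ancAt I J.n).n = J.n from rfl)
      (fun hkne => hk hkne.symm)).mono_left (subset_ancAt I J.n h)

lemma trichotomy (I J : DyadicInterval) :
    I.set ⊆ J.set ∨ J.set ⊆ I.set ∨ Disjoint I.set J.set := by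
  rcases le_total J.n I.n with h | h
  · rcases subset_or_disjoint_of_le h with h' | h'
    · exact Or.inl h'
    · exact Or.inr (Or.inr h')
  · rcases subset_or_disjoint_of_le h with h' | h'
    · exact Or.inr (Or.inl h')
    · exact Or.inr (Or.inr h'.symm)

lemma nested_of_not_disjoint {I J : DyadicInterval} (h : ¬ Disjoint I.set J.set) :
    I.set ⊆ J.set ∨ J.set ⊆ I.set := by
  rcases trichotomy I J with h' | h' | h'
  · exact Or.inl h'
  · exact Or.inr h'
  · exact absurd h' h

lemma ssubset_child {I J : DyadicInterval} (h : I.set ⊂ J.set) :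
    I.set ⊆ J.left.set ∨ I.set ⊆ J.right.set := by
  obtain ⟨hsub, hne⟩ := h
  rcases trichotomy I J.left with hl | hl | hl
  · exact Or.inl hl
  · -- J.left.set ⊆ I.set
    rcases trichotomy I J.right with hr | hr | hr
    · -- I ⊆ J.right : left ⊆ I ⊆ right, contradiction
      exfalso
      obtain ⟨x, hx⟩ := J.left.set_nonempty
      exact J.disjoint_left_right.ne_of_mem hx (hr (hl hx)) rfl
    · -- J.right ⊆ I : then J ⊆ I, so I.set = J.set, contra
      exfalso
      apply hne
      rw [← J.left_union_right]
      exact Set.union_subset hl hr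
    · -- Disjoint I right : I ⊆ left
      left
      intro t ht
      have htJ := hsub ht
      rw [← J.left_union_right] at htJ
      rcases htJ with h' | h'
      · exact h'
      · exact absurd rfl (hr.ne_of_mem ht h')
  · -- Disjoint I left : I ⊆ right
    right
    intro t ht
    have htJ := hsub ht
    rw [← J.left_union_right] at htJ
    rcases htJ with h' | h'
    · exact absurd rfl (hl.ne_of_mem ht h')
    · exact h'

end DyadicInterval

namespace DyadicInterval

lemma ssubset_iff {I J : DyadicInterval} : J.set ⊂ I.set ↔ J.set ⊆ I.set ∧ J ≠ I := by
  rw [Set.ssubset_iff_subset_ne]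
  constructor
  · rintro ⟨h1, h2⟩; exact ⟨h1, fun he => h2 (by rw [he])⟩
  · rintro ⟨h1, h2⟩; exact ⟨h1, fun he => h2 (set_inj _ _ he)⟩

/-- The set of strict dyadic ancestors of `J`. -/
def anc (J : DyadicInterval) : Finset DyadicInterval :=
  (Finset.range J.n).image (ancAt J)

lemma ancAt_self (J : DyadicInterval) : ancAt J J.n = J := by
  have hk : (ancAt J J.n).k = J.k := by
    show J.k / 2^(J.n - J.n) = J.k
    simp
  exact ext_nk rfl hk

lemma mem_anc {I J : DyadicInterval} : I ∈ anc J ↔ J.set ⊂ I.set := by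
  simp only [anc, Finset.mem_image, Finset.mem_range]
  constructor
  · rintro ⟨m, hm, rfl⟩
    rw [ssubset_iff]
    refine ⟨subset_ancAt J m hm.le, fun he => ?_⟩
    have h2 : J.n = (ancAt J m).n := congrArg DyadicInterval.n he
    have h3 : (ancAt J m).n = m := rfl
    omega
  · intro hss
    have hsub := hss.subset
    have hn := n_le_of_subset hsub
    have heq := eq_ancAt_of_subset hsub
    refine ⟨I.n, ?_, heq.symm⟩
    rcases Nat.lt_or_ge I.n J.n with h | h
    · exact h
    · exfalso
      have h1 : I.n = J.n := by omega
      have h2 : I = J := by rw [heq, h1, ancAt_self]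
      exact (ssubset_iff.1 hss).2 h2.symm

lemma not_mem_anc_self (J : DyadicInterval) : J ∉ anc J := by
  intro h
  exact (ssubset_irrefl J.set) (mem_anc.1 h)

lemma parent_left_or_right {J : DyadicInterval} {n : ℕ} (hJ : J.n = n + 1) :
    J = (ancAt J n).left ∨ J = (ancAt J n).right := by
  have hd : J.n - n = 1 := by omega
  have hk : (ancAt J n).k = J.k / 2 := by
    show J.k / 2^(J.n-n) = J.k/2
    rw [hd, pow_one]
  rcases Nat.even_or_odd J.k with ⟨m, hm⟩ | ⟨m, hm⟩
  · left
    apply ext_nk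
    · exact hJ
    · show J.k = 2 * (ancAt J n).k
      rw [hk]; omega
  · right
    apply ext_nk
    · exact hJ
    · show J.k = 2 * (ancAt J n).k + 1
      rw [hk]; omega

lemma ssubset_of_child_left {P : DyadicInterval} : P.left.set ⊂ P.set := by
  rw [ssubset_iff]
  refine ⟨P.left_subset, fun he => ?_⟩
  have : P.left.n = P.n := congrArg DyadicInterval.n he
  have h2 : P.left.n = P.n + 1 := rfl
  omega

lemma ssubset_of_child_right {P : DyadicInterval} : P.right.set ⊂ P.set := by
  rw [ssubset_iff]
  refine ⟨P.right_subset, fun he => ?_⟩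
  have : P.right.n = P.n := congrArg DyadicInterval.n he
  have h2 : P.right.n = P.n + 1 := rfl
  omega

lemma anc_insert {J : DyadicInterval} {n : ℕ} (hJ : J.n = n + 1) :
    anc J = insert (ancAt J n) (anc (ancAt J n)) := by
  have hPn : (ancAt J n).n = n := rfl
  have hJP : J.set ⊂ (ancAt J n).set := by
    rw [ssubset_iff]
    refine ⟨subset_ancAt J n (by omega), fun he => ?_⟩
    have hh : J.n = (ancAt J n).n := congrArg DyadicInterval.n he
    rw [hPn] at hh; omega
  ext I
  rw [Finset.mem_insert, mem_anc, mem_anc]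
  constructor
  · intro hss
    have hsub := hss.subset
    have hn := n_le_of_subset hsub
    have hne : I ≠ J := fun he => (ssubset_iff.1 hss).2 he.symm
    have hnI : I.n ≤ n := by
      rcases Nat.lt_or_ge I.n J.n with h | h
      · omega
      · exfalso
        have h1 : I.n = J.n := by omega
        have h2 : I = J := by rw [eq_ancAt_of_subset hsub, h1, ancAt_self]
        exact hne h2
    rcases Nat.lt_or_ge I.n n with h | h
    · right
      have hnd : ¬ Disjoint (ancAt J n).set I.set := fun hd => by
        obtain ⟨x, hx⟩ := J.set_nonempty
        exact hd.ne_of_mem (hJP.subset hx) (hsub hx) rfl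
      rcases nested_of_not_disjoint hnd with h' | h'
      · rw [ssubset_iff]
        refine ⟨h', fun he => ?_⟩
        have := congrArg DyadicInterval.n he
        rw [hPn] at this; omega
      · exfalso
        have := n_le_of_subset h'
        rw [hPn] at this; omega
    · left
      have h1 : I.n = n := by omega
      have heq := eq_ancAt_of_subset hsub
      rw [h1] at heq
      exact heq
  · rintro (rfl | hss)
    · exact hJP
    · exact hJP.trans hss

/-- The (constant) value of `h_I` on a strict dyadic subinterval `J ⊊ I`. -/
def hsign (I J : DyadicInterval) : ℝ :=
  if J.set ⊆ I.left.set then (Real.sqrt I.len)⁻¹ else -(Real.sqrt I.len)⁻¹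

lemma hsign_sq (I J : DyadicInterval) : hsign I J * hsign I J = I.len⁻¹ := by
  have h : (Real.sqrt I.len)⁻¹ * (Real.sqrt I.len)⁻¹ = I.len⁻¹ := by
    rw [← mul_inv, Real.mul_self_sqrt I.len_nonneg]
  unfold hsign
  split
  · exact h
  · rw [neg_mul_neg]; exact h

lemma ind_of_mem {I : DyadicInterval} {t : ℝ} (ht : t ∈ I.set) : I.ind t = 1 :=
  Set.indicator_of_mem ht _

lemma ind_of_not_mem {I : DyadicInterval} {t : ℝ} (ht : t ∉ I.set) : I.ind t = 0 :=
  Set.indicator_of_notMem ht _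

lemma haar_zero_of_not_mem {I : DyadicInterval} {t : ℝ} (ht : t ∉ I.set) : I.haar t = 0 := by
  have h1 : I.left.ind t = 0 := ind_of_not_mem (fun hm => ht (I.left_subset hm))
  have h2 : I.right.ind t = 0 := ind_of_not_mem (fun hm => ht (I.right_subset hm))
  rw [haar, h1, h2]; ring

lemma haar_eq_hsign {I J : DyadicInterval} (h : J.set ⊂ I.set) {t : ℝ} (ht : t ∈ J.set) :
    I.haar t = hsign I J := by
  rcases ssubset_child h with hc | hc
  · have h1 : I.left.ind t = 1 := ind_of_mem (hc ht)
    have h2 : I.right.ind t = 0 := ind_of_not_mem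
      (fun hm => I.disjoint_left_right.ne_of_mem (hc ht) hm rfl)
    rw [haar, h1, h2, hsign, if_pos hc]; ring
  · have hnotleft : ¬ J.set ⊆ I.left.set := fun hm =>
      I.disjoint_left_right.ne_of_mem (hm ht) (hc ht) rfl
    have h1 : I.left.ind t = 0 := ind_of_not_mem
      (fun hm => I.disjoint_left_right.ne_of_mem hm (hc ht) rfl)
    have h2 : I.right.ind t = 1 := ind_of_mem (hc ht)
    rw [haar, h1, h2, hsign, if_neg hnotleft]; ring

lemma hsign_eq_of_subset {I J P : DyadicInterval} (hJP : J.set ⊆ P.set) (hPI : P.set ⊂ I.set) :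
    hsign I J = hsign I P := by
  unfold hsign
  rcases ssubset_child hPI with hc | hc
  · rw [if_pos (hJP.trans hc), if_pos hc]
  · have h1 : ¬ P.set ⊆ I.left.set := fun hm => by
      obtain ⟨x,hx⟩ := P.set_nonempty
      exact I.disjoint_left_right.ne_of_mem (hm hx) (hc hx) rfl
    have h2 : ¬ J.set ⊆ I.left.set := fun hm => by
      obtain ⟨x,hx⟩ := J.set_nonempty
      exact I.disjoint_left_right.ne_of_mem (hm hx) (hc (hJP hx)) rfl
    rw [if_neg h2, if_neg h1]

lemma hsign_left (P : DyadicInterval) : hsign P P.left = (Real.sqrt P.len)⁻¹ := by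
  rw [hsign, if_pos (Set.Subset.refl _)]

lemma hsign_right (P : DyadicInterval) : hsign P P.right = -(Real.sqrt P.len)⁻¹ := by
  rw [hsign, if_neg]
  intro hm
  obtain ⟨x, hx⟩ := P.right.set_nonempty
  exact P.disjoint_left_right.ne_of_mem (hm hx) hx rfl

lemma len_left (I : DyadicInterval) : I.left.len = I.len / 2 := by
  show ((2:ℝ)^(I.n+1))⁻¹ = ((2:ℝ)^I.n)⁻¹ / 2
  rw [pow_succ, mul_inv, div_eq_mul_inv]

lemma len_right (I : DyadicInterval) : I.right.len = I.len / 2 := by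
  show ((2:ℝ)^(I.n+1))⁻¹ = ((2:ℝ)^I.n)⁻¹ / 2
  rw [pow_succ, mul_inv, div_eq_mul_inv]

end DyadicInterval

section Integration
open DyadicInterval

instance circle_finite : IsFiniteMeasure circleMeasure := by
  constructor
  rw [circleMeasure, Measure.restrict_apply_univ, Real.volume_Ico]
  exact ENNReal.ofReal_lt_top

lemma circle_measure_set (I : DyadicInterval) :
    circleMeasure I.set = ENNReal.ofReal I.len := by
  rw [circleMeasure, Measure.restrict_apply I.measurableSet_set,
    Set.inter_eq_self_of_subset_left I.set_subset_Ico, I.volume_set]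

lemma circle_restrict (I : DyadicInterval) :
    circleMeasure.restrict I.set = volume.restrict I.set := by
  rw [circleMeasure, Measure.restrict_restrict I.measurableSet_set,
    Set.inter_eq_self_of_subset_left I.set_subset_Ico]

lemma measurable_ind (I : DyadicInterval) : Measurable I.ind :=
  measurable_const.indicator I.measurableSet_set

lemma measurable_haar (I : DyadicInterval) : Measurable I.haar :=
  (((measurable_ind I.left).sub (measurable_ind I.right)).const_mul _)

lemma ind_nonneg (I : DyadicInterval) (t : ℝ) : 0 ≤ I.ind t := by
  by_cases h : t ∈ I.set
  · rw [ind_of_mem h]; norm_num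
  · rw [ind_of_not_mem h]

lemma ind_le_one (I : DyadicInterval) (t : ℝ) : I.ind t ≤ 1 := by
  by_cases h : t ∈ I.set
  · rw [ind_of_mem h]
  · rw [ind_of_not_mem h]; norm_num

lemma abs_haar_le (I : DyadicInterval) (t : ℝ) : |I.haar t| ≤ (Real.sqrt I.len)⁻¹ := by
  rw [DyadicInterval.haar, abs_mul, abs_of_nonneg (by positivity : (0:ℝ) ≤ (Real.sqrt I.len)⁻¹)]
  have h1 := ind_nonneg I.left t
  have h2 := ind_nonneg I.right t
  have h3 := ind_le_one I.left t
  have h4 := ind_le_one I.right t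
  have : |I.left.ind t - I.right.ind t| ≤ 1 := abs_le.2 ⟨by linarith, by linarith⟩
  calc (Real.sqrt I.len)⁻¹ * |I.left.ind t - I.right.ind t|
      ≤ (Real.sqrt I.len)⁻¹ * 1 := by
        apply mul_le_mul_of_nonneg_left this (by positivity)
    _ = (Real.sqrt I.len)⁻¹ := mul_one _

lemma integrable_of_bdd {ν : Measure ℝ} [IsFiniteMeasure ν] {g : ℝ → ℝ}
    (hm : Measurable g) {C : ℝ} (hC : ∀ t, |g t| ≤ C) : Integrable g ν :=
  Integrable.mono' (integrable_const C) hm.aestronglyMeasurable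
    (Filter.Eventually.of_forall (fun t => by simpa using hC t))

lemma integrable_ind {ν : Measure ℝ} [IsFiniteMeasure ν] (I : DyadicInterval) :
    Integrable I.ind ν :=
  integrable_of_bdd (measurable_ind I) (fun t => by
    rw [abs_of_nonneg (ind_nonneg I t)]; exact ind_le_one I t)

lemma integrable_haar {ν : Measure ℝ} [IsFiniteMeasure ν] (I : DyadicInterval) :
    Integrable I.haar ν :=
  integrable_of_bdd (measurable_haar I) (abs_haar_le I)

lemma integrable_haar_mul_haar {ν : Measure ℝ} [IsFiniteMeasure ν] (I J : DyadicInterval) :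
    Integrable (fun t => I.haar t * J.haar t) ν :=
  integrable_of_bdd ((measurable_haar I).mul (measurable_haar J))
    (C := (Real.sqrt I.len)⁻¹ * (Real.sqrt J.len)⁻¹) (fun t => by
      rw [abs_mul]
      exact mul_le_mul (abs_haar_le I t) (abs_haar_le J t) (abs_nonneg _) (by positivity))

lemma integrable_haar_mul_ind {ν : Measure ℝ} [IsFiniteMeasure ν] (I J : DyadicInterval) :
    Integrable (fun t => I.haar t * J.ind t) ν :=
  integrable_of_bdd ((measurable_haar I).mul (measurable_ind J))
    (C := (Real.sqrt I.len)⁻¹ * 1) (fun t => by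
      rw [abs_mul]
      exact mul_le_mul (abs_haar_le I t) (by
        rw [abs_of_nonneg (ind_nonneg J t)]; exact ind_le_one J t) (abs_nonneg _)
        (by positivity))

lemma integrable_ind_volume (I : DyadicInterval) : Integrable I.ind volume := by
  unfold DyadicInterval.ind
  rw [MeasureTheory.integrable_indicator_iff I.measurableSet_set]
  apply (MeasureTheory.integrableOn_const_iff (by simp)).2
  right
  rw [I.volume_set]
  exact ENNReal.ofReal_lt_top

lemma integral_ind_volume (I : DyadicInterval) : ∫ t, I.ind t = I.len := by
  unfold DyadicInterval.ind
  rw [MeasureTheory.integral_indicator_const (1:ℝ) I.measurableSet_set, measureReal_def, I.volume_set,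
    ENNReal.toReal_ofReal I.len_nonneg, smul_eq_mul, mul_one]

/-- Restricting the integral of a function supported in `s ⊆ u`. -/
lemma integral_restrict_of_support {E : Type*} [NormedAddCommGroup E] [NormedSpace ℝ E]
    (g : ℝ → E) (s u : Set ℝ) (hu : MeasurableSet u)
    (hsupp : ∀ t, t ∉ s → g t = 0) (hsu : s ⊆ u) :
    ∫ t, g t ∂(volume.restrict u) = ∫ t, g t := by
  have : ∫ t, g t ∂(volume.restrict u) = ∫ t, u.indicator g t := by
    rw [MeasureTheory.integral_indicator hu]
  rw [this]
  congr 1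
  funext t
  by_cases h : t ∈ u
  · rw [Set.indicator_of_mem h]
  · rw [Set.indicator_of_notMem h, hsupp t (fun hts => h (hsu hts))]

lemma ind_smul {E : Type*} [NormedAddCommGroup E] [NormedSpace ℝ E]
    (I : DyadicInterval) (f : ℝ → E) (t : ℝ) :
    I.ind t • f t = I.set.indicator f t := by
  by_cases h : t ∈ I.set
  · rw [ind_of_mem h, Set.indicator_of_mem h, one_smul]
  · rw [ind_of_not_mem h, Set.indicator_of_notMem h, zero_smul]

lemma integral_ind_smul {E : Type*} [NormedAddCommGroup E] [NormedSpace ℝ E]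
    (I : DyadicInterval) (f : ℝ → E) :
    ∫ t, I.ind t • f t ∂circleMeasure = ∫ t in I.set, f t := by
  rw [show (fun t => I.ind t • f t) = fun t => I.set.indicator f t from funext (ind_smul I f)]
  rw [MeasureTheory.integral_indicator I.measurableSet_set, circle_restrict I]

lemma haar_smul {E : Type*} [NormedAddCommGroup E] [NormedSpace ℝ E]
    (I : DyadicInterval) (f : ℝ → E) (t : ℝ) :
    I.haar t • f t = (Real.sqrt I.len)⁻¹ • (I.left.ind t • f t - I.right.ind t • f t) := by
  rw [DyadicInterval.haar, mul_smul, sub_smul]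

lemma haarCoeff_eq {E : Type*} [NormedAddCommGroup E] [NormedSpace ℝ E]
    (I : DyadicInterval) (f : ℝ → E) (hf : Integrable f circleMeasure) :
    haarCoeff f I = (Real.sqrt I.len)⁻¹ •
      ((∫ t in I.left.set, f t) - ∫ t in I.right.set, f t) := by
  unfold haarCoeff
  rw [show (fun t => I.haar t • f t)
      = fun t => (Real.sqrt I.len)⁻¹ • (I.left.ind t • f t - I.right.ind t • f t)
    from funext (haar_smul I f)]
  rw [integral_smul]
  congr 1
  have hl : Integrable (fun t => I.left.ind t • f t) circleMeasure := by
    rw [show (fun t => I.left.ind t • f t) = fun t => I.left.set.indicator f t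
      from funext (ind_smul I.left f)]
    exact hf.indicator I.left.measurableSet_set
  have hr : Integrable (fun t => I.right.ind t • f t) circleMeasure := by
    rw [show (fun t => I.right.ind t • f t) = fun t => I.right.set.indicator f t
      from funext (ind_smul I.right f)]
    exact hf.indicator I.right.measurableSet_set
  rw [integral_sub hl hr, integral_ind_smul, integral_ind_smul]

lemma setIntegral_split {E : Type*} [NormedAddCommGroup E] [NormedSpace ℝ E]
    (I : DyadicInterval) (f : ℝ → E) (hf : Integrable f circleMeasure) :
    ∫ t in I.set, f t = (∫ t in I.left.set, f t) + ∫ t in I.right.set, f t := by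
  have h : IntegrableOn f (Set.Ico (0:ℝ) 1) := hf
  rw [← I.left_union_right]
  exact MeasureTheory.setIntegral_union I.disjoint_left_right I.right.measurableSet_set
    (h.mono_set (Set.Subset.trans I.left.set_subset_Ico (Set.Subset.refl _)))
    (h.mono_set (Set.Subset.trans I.right.set_subset_Ico (Set.Subset.refl _)))

/- pointwise product identities -/

lemma haar_sq (I : DyadicInterval) (t : ℝ) :
    I.haar t * I.haar t = I.len⁻¹ * (I.left.ind t + I.right.ind t) := by
  by_cases hl : t ∈ I.left.set
  · have h2 : I.right.ind t = 0 :=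
      ind_of_not_mem (fun hm => I.disjoint_left_right.ne_of_mem hl hm rfl)
    rw [DyadicInterval.haar, ind_of_mem hl, h2]
    have : (Real.sqrt I.len)⁻¹ * (Real.sqrt I.len)⁻¹ = I.len⁻¹ := by
      rw [← mul_inv, Real.mul_self_sqrt I.len_nonneg]
    nlinarith [this]
  · by_cases hr : t ∈ I.right.set
    · rw [DyadicInterval.haar, ind_of_mem hr, ind_of_not_mem hl]
      have : (Real.sqrt I.len)⁻¹ * (Real.sqrt I.len)⁻¹ = I.len⁻¹ := by
        rw [← mul_inv, Real.mul_self_sqrt I.len_nonneg]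
      nlinarith [this]
    · rw [DyadicInterval.haar, ind_of_not_mem hl, ind_of_not_mem hr]
      ring

lemma haar_mul_haar_of_ssub {I J : DyadicInterval} (h : J.set ⊂ I.set) (t : ℝ) :
    I.haar t * J.haar t = hsign I J * J.haar t := by
  by_cases ht : t ∈ J.set
  · rw [haar_eq_hsign h ht]
  · rw [haar_zero_of_not_mem ht, mul_zero, mul_zero]

lemma haar_mul_haar_of_disj {I J : DyadicInterval} (h : Disjoint I.set J.set) (t : ℝ) :
    I.haar t * J.haar t = 0 := by
  by_cases ht : t ∈ I.set
  · rw [haar_zero_of_not_mem (fun hm => h.ne_of_mem ht hm rfl), mul_zero]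
  · rw [haar_zero_of_not_mem ht, zero_mul]

lemma haar_mul_ind_of_ssub {I J : DyadicInterval} (h : J.set ⊂ I.set) (t : ℝ) :
    I.haar t * J.ind t = hsign I J * J.ind t := by
  by_cases ht : t ∈ J.set
  · rw [haar_eq_hsign h ht]
  · rw [ind_of_not_mem ht, mul_zero, mul_zero]

lemma haar_mul_ind_of_sub {I J : DyadicInterval} (h : I.set ⊆ J.set) (t : ℝ) :
    I.haar t * J.ind t = I.haar t := by
  by_cases ht : t ∈ I.set
  · rw [ind_of_mem (h ht), mul_one]
  · rw [haar_zero_of_not_mem ht, zero_mul]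

lemma haar_mul_ind_of_disj {I J : DyadicInterval} (h : Disjoint I.set J.set) (t : ℝ) :
    I.haar t * J.ind t = 0 := by
  by_cases ht : t ∈ I.set
  · rw [ind_of_not_mem (fun hm => h.ne_of_mem ht hm rfl), mul_zero]
  · rw [haar_zero_of_not_mem ht, zero_mul]

lemma integral_haar_volume (I : DyadicInterval) : ∫ t, I.haar t = 0 := by
  have : (fun t => I.haar t) =
      fun t => (Real.sqrt I.len)⁻¹ * (I.left.ind t - I.right.ind t) := rfl
  rw [this]
  rw [MeasureTheory.integral_const_mul]
  rw [integral_sub (integrable_ind_volume I.left) (integrable_ind_volume I.right),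
    integral_ind_volume, integral_ind_volume, I.len_left, I.len_right]
  ring

lemma integral_haar_mul_haar_volume (I J : DyadicInterval) :
    ∫ t, I.haar t * J.haar t = if I = J then 1 else 0 := by
  by_cases he : I = J
  · subst he
    rw [if_pos rfl]
    rw [show (fun t => I.haar t * I.haar t)
        = fun t => I.len⁻¹ * (I.left.ind t + I.right.ind t) from funext (haar_sq I)]
    rw [MeasureTheory.integral_const_mul,
      integral_add (integrable_ind_volume I.left) (integrable_ind_volume I.right),
      integral_ind_volume, integral_ind_volume, I.len_left, I.len_right,
      show I.len/2 + I.len/2 = I.len by ring, inv_mul_cancel₀ I.len_pos.ne']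
  · rw [if_neg he]
    rcases trichotomy I J with h | h | h
    · have hss : I.set ⊂ J.set := ssubset_iff.2 ⟨h, he⟩
      rw [show (fun t => I.haar t * J.haar t) = fun t => hsign J I * I.haar t from
        funext (fun t => by rw [mul_comm]; exact haar_mul_haar_of_ssub hss t)]
      rw [MeasureTheory.integral_const_mul, integral_haar_volume, mul_zero]
    · have hss : J.set ⊂ I.set := ssubset_iff.2 ⟨h, fun hh => he hh.symm⟩
      rw [show (fun t => I.haar t * J.haar t) = fun t => hsign I J * J.haar t from
        funext (haar_mul_haar_of_ssub hss)]
      rw [MeasureTheory.integral_const_mul, integral_haar_volume, mul_zero]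
    · rw [show (fun t => I.haar t * J.haar t) = fun t => (0:ℝ) from
        funext (haar_mul_haar_of_disj h)]
      simp

lemma haar_mul_haar_support {I J : DyadicInterval} (t : ℝ) (ht : t ∉ I.set) :
    I.haar t * J.haar t = 0 := by
  rw [haar_zero_of_not_mem ht, zero_mul]

lemma integral_haar_mul_haar (I J : DyadicInterval) :
    ∫ t, I.haar t * J.haar t ∂circleMeasure = if I = J then 1 else 0 := by
  rw [circleMeasure,
    integral_restrict_of_support _ I.set _ measurableSet_Ico
      (fun t ht => haar_mul_haar_support t ht) I.set_subset_Ico,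
    integral_haar_mul_haar_volume]

lemma integral_haar_mul_haar_restrict {I J K : DyadicInterval}
    (hI : I.set ⊆ K.set) :
    ∫ t, I.haar t * J.haar t ∂(volume.restrict K.set) = if I = J then 1 else 0 := by
  rw [integral_restrict_of_support _ I.set _ K.measurableSet_set
      (fun t ht => haar_mul_haar_support t ht) hI,
    integral_haar_mul_haar_volume]

lemma integral_haar_mul_ind (I J : DyadicInterval) :
    ∫ t, I.haar t * J.ind t ∂circleMeasure
      = if J.set ⊂ I.set then hsign I J * J.len else 0 := by
  have hsup : ∀ t, t ∉ I.set → I.haar t * J.ind t = 0 := fun t ht => by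
    rw [haar_zero_of_not_mem ht, zero_mul]
  rw [circleMeasure, integral_restrict_of_support _ I.set _ measurableSet_Ico hsup
    I.set_subset_Ico]
  by_cases h : J.set ⊂ I.set
  · rw [if_pos h]
    rw [show (fun t => I.haar t * J.ind t) = fun t => hsign I J * J.ind t from
      funext (haar_mul_ind_of_ssub h)]
    rw [MeasureTheory.integral_const_mul, integral_ind_volume]
  · rw [if_neg h]
    rcases trichotomy I J with h' | h' | h'
    · rw [show (fun t => I.haar t * J.ind t) = fun t => I.haar t from
        funext (haar_mul_ind_of_sub h')]
      exact integral_haar_volume I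
    · by_cases he : J.set = I.set
      · rw [show (fun t => I.haar t * J.ind t) = fun t => I.haar t from
          funext (haar_mul_ind_of_sub (he ▸ Set.Subset.refl _))]
        exact integral_haar_volume I
      · exact absurd (Set.ssubset_iff_subset_ne.2 ⟨h', he⟩) h
    · rw [show (fun t => I.haar t * J.ind t) = fun t => (0:ℝ) from
        funext (haar_mul_ind_of_disj h')]
      simp

end Integration

section Coeffs
open DyadicInterval

variable {E : Type*} [NormedAddCommGroup E] [NormedSpace ℝ E] [CompleteSpace E]

lemma haarCoeff_haar_sum (s : Finset DyadicInterval) (v : DyadicInterval → E)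
    (I : DyadicInterval) :
    haarCoeff (fun t => ∑ J ∈ s, J.haar t • v J) I = if I ∈ s then v I else 0 := by
  unfold haarCoeff
  have h1 : (fun t => I.haar t • ∑ J ∈ s, J.haar t • v J)
      = fun t => ∑ J ∈ s, (I.haar t * J.haar t) • v J := by
    funext t
    rw [Finset.smul_sum]
    exact Finset.sum_congr rfl (fun J _ => (mul_smul _ _ _).symm)
  rw [h1, integral_finset_sum s (fun J _ => (integrable_haar_mul_haar I J).smul_const (v J))]
  have h2 : ∀ J ∈ s, (∫ t, (I.haar t * J.haar t) • v J ∂circleMeasure)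
      = if J = I then v J else 0 := by
    intro J _
    rw [integral_smul_const, integral_haar_mul_haar]
    by_cases h : I = J
    · rw [if_pos h, if_pos h.symm, one_smul]
    · rw [if_neg h, if_neg (fun hh => h hh.symm), zero_smul]
  rw [Finset.sum_congr rfl h2, Finset.sum_ite_eq' s I v]

lemma haarCoeff_indlen_sum (s : Finset DyadicInterval) (w : DyadicInterval → E)
    (I : DyadicInterval) :
    haarCoeff (fun t => ∑ J ∈ s, (J.len⁻¹ * J.ind t) • w J) I
      = ∑ J ∈ s.filter (fun J => J.set ⊂ I.set), hsign I J • w J := by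
  unfold haarCoeff
  have h1 : (fun t => I.haar t • ∑ J ∈ s, (J.len⁻¹ * J.ind t) • w J)
      = fun t => ∑ J ∈ s, (I.haar t * J.ind t) • (J.len⁻¹ • w J) := by
    funext t
    rw [Finset.smul_sum]
    refine Finset.sum_congr rfl (fun J _ => ?_)
    rw [smul_smul, smul_smul]
    congr 1
    ring
  rw [h1, integral_finset_sum s (fun J _ => (integrable_haar_mul_ind I J).smul_const _)]
  have h2 : ∀ J ∈ s, (∫ t, (I.haar t * J.ind t) • (J.len⁻¹ • w J) ∂circleMeasure)
      = if J.set ⊂ I.set then hsign I J • w J else 0 := by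
    intro J _
    rw [integral_smul_const, integral_haar_mul_ind]
    by_cases h : J.set ⊂ I.set
    · rw [if_pos h, if_pos h, smul_smul]
      congr 1
      have := J.len_pos.ne'
      field_simp
    · rw [if_neg h, if_neg h, zero_smul]
  rw [Finset.sum_congr rfl h2, ← Finset.sum_filter]

end Coeffs

section MainIdentity
open DyadicInterval

lemma sqrt_len_inv_mul_self (I : DyadicInterval) :
    (Real.sqrt I.len)⁻¹ * (Real.sqrt I.len)⁻¹ = I.len⁻¹ := by
  rw [← mul_inv, Real.mul_self_sqrt I.len_nonneg]

lemma ind_split (P : DyadicInterval) (t : ℝ) : P.ind t = P.left.ind t + P.right.ind t := by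
  by_cases hl : t ∈ P.left.set
  · rw [ind_of_mem (P.left_subset hl), ind_of_mem hl,
      ind_of_not_mem (fun hm => P.disjoint_left_right.ne_of_mem hl hm rfl)]
    ring
  · by_cases hr : t ∈ P.right.set
    · rw [ind_of_mem (P.right_subset hr), ind_of_not_mem hl, ind_of_mem hr]; ring
    · rw [ind_of_not_mem (fun hm => ?_), ind_of_not_mem hl, ind_of_not_mem hr]
      · ring
      · rw [← P.left_union_right] at hm
        rcases hm with h | h
        · exact hl h
        · exact hr h

lemma child_ind_identity {P J : DyadicInterval} (hJ : J = P.left ∨ J = P.right) (t : ℝ) :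
    J.len⁻¹ * J.ind t = P.len⁻¹ * P.ind t + P.haar t * hsign P J := by
  have hne := P.len_pos.ne'
  have hss := sqrt_len_inv_mul_self P
  rcases hJ with rfl | rfl
  · rw [hsign_left, ind_split P t, DyadicInterval.haar, len_left]
    have : (Real.sqrt P.len)⁻¹ * (P.left.ind t - P.right.ind t) * (Real.sqrt P.len)⁻¹
        = P.len⁻¹ * (P.left.ind t - P.right.ind t) := by
      rw [show (Real.sqrt P.len)⁻¹ * (P.left.ind t - P.right.ind t) * (Real.sqrt P.len)⁻¹
        = ((Real.sqrt P.len)⁻¹ * (Real.sqrt P.len)⁻¹) * (P.left.ind t - P.right.ind t)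
        from by ring, hss]
    rw [this]
    have h2 : (P.len/2)⁻¹ = 2 * P.len⁻¹ := by field_simp
    rw [h2]
    ring
  · rw [hsign_right, ind_split P t, DyadicInterval.haar, len_right]
    have : (Real.sqrt P.len)⁻¹ * (P.left.ind t - P.right.ind t) * -(Real.sqrt P.len)⁻¹
        = -(P.len⁻¹ * (P.left.ind t - P.right.ind t)) := by
      rw [show (Real.sqrt P.len)⁻¹ * (P.left.ind t - P.right.ind t) * -(Real.sqrt P.len)⁻¹
        = -(((Real.sqrt P.len)⁻¹ * (Real.sqrt P.len)⁻¹) * (P.left.ind t - P.right.ind t))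
        from by ring, hss]
    rw [this]
    have h2 : (P.len/2)⁻¹ = 2 * P.len⁻¹ := by field_simp
    rw [h2]
    ring

lemma child_avg_identity {E : Type*} [NormedAddCommGroup E] [NormedSpace ℝ E]
    {P J : DyadicInterval} (hJ : J = P.left ∨ J = P.right)
    (f : ℝ → E) (hf : Integrable f circleMeasure) :
    avg f J = avg f P + hsign P J • haarCoeff f P := by
  have hne := P.len_pos.ne'
  have hss := sqrt_len_inv_mul_self P
  have h2 : (P.len/2)⁻¹ = 2 * P.len⁻¹ := by field_simp
  rcases hJ with rfl | rfl
  · rw [hsign_left, haarCoeff_eq P f hf, avg, avg, len_left, setIntegral_split P f hf,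
      smul_smul, hss, h2]
    module
  · rw [hsign_right, haarCoeff_eq P f hf, avg, avg, len_right, setIntegral_split P f hf,
      smul_smul, h2, show -(Real.sqrt P.len)⁻¹ * (Real.sqrt P.len)⁻¹ = -P.len⁻¹ from by
        rw [neg_mul, hss]]
    module

private lemma module_alg {E : Type*} [NormedAddCommGroup E] [NormedSpace ℝ E]
    (a h s l : ℝ) (hls : s * s = l) (v w : E) :
    (a + h*s) • (v + s • w) = (h*s) • v + ((a*s + h*l) • w) + a • v := by
  rw [← hls]
  module

/-- The key telescoping identity along the ancestors of `J`. -/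
lemma telescope {E : Type*} [NormedAddCommGroup E] [NormedSpace ℝ E]
    (f : ℝ → E) (hf : Integrable f circleMeasure) (hmean : (∫ t, f t ∂circleMeasure) = 0) :
    ∀ (n : ℕ) (J : DyadicInterval), J.n = n → ∀ t ∈ Set.Ico (0:ℝ) 1,
    (J.len⁻¹ * J.ind t) • avg f J
      = (∑ I ∈ anc J, (I.haar t * hsign I J) • avg f I)
        + ∑ I ∈ anc J, (I.len⁻¹ * I.ind t * hsign I J + I.haar t * I.len⁻¹) • haarCoeff f I := by
  intro n
  induction n with
  | zero =>
    intro J hJ t ht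
    have hk : J.k = 0 := by
      have := J.hk
      rw [hJ] at this
      omega
    have hset : J.set = Set.Ico (0:ℝ) 1 := by
      rw [DyadicInterval.set, hJ, hk]
      norm_num
    have hanc : anc J = ∅ := by
      rw [anc, hJ]
      simp
    have havg : avg f J = 0 := by
      rw [avg, hset, show (∫ t in Set.Ico (0:ℝ) 1, f t) = ∫ t, f t ∂circleMeasure from by
        rw [circleMeasure], hmean, smul_zero]
    rw [hanc, Finset.sum_empty, Finset.sum_empty, havg, smul_zero, add_zero]
  | succ n ih =>
    intro J hJ t ht
    have hPn : (ancAt J n).n = n := rfl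
    have hchild := parent_left_or_right hJ
    have hJP : J.set ⊂ (ancAt J n).set := by
      rcases hchild with h | h
      · have h2 := ssubset_of_child_left (P := ancAt J n)
        rw [← h] at h2
        exact h2
      · have h2 := ssubset_of_child_right (P := ancAt J n)
        rw [← h] at h2
        exact h2
    rw [anc_insert hJ, Finset.sum_insert (not_mem_anc_self _),
      Finset.sum_insert (not_mem_anc_self _)]
    have hs1 : ∀ I ∈ anc (ancAt J n), (I.haar t * hsign I J) • avg f I
        = (I.haar t * hsign I (ancAt J n)) • avg f I := by
      intro I hI
      rw [hsign_eq_of_subset hJP.subset (mem_anc.1 hI)]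
    have hs2 : ∀ I ∈ anc (ancAt J n),
        (I.len⁻¹ * I.ind t * hsign I J + I.haar t * I.len⁻¹) • haarCoeff f I
        = (I.len⁻¹ * I.ind t * hsign I (ancAt J n) + I.haar t * I.len⁻¹) • haarCoeff f I := by
      intro I hI
      rw [hsign_eq_of_subset hJP.subset (mem_anc.1 hI)]
    rw [Finset.sum_congr rfl hs1, Finset.sum_congr rfl hs2]
    have hrec := ih (ancAt J n) hPn t ht
    rw [child_ind_identity hchild t, child_avg_identity hchild f hf,
      module_alg _ _ _ _ (hsign_sq (ancAt J n) J) _ _, hrec]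
    abel

end MainIdentity

section Part1
open DyadicInterval

variable {H : Type*} [NormedAddCommGroup H] [InnerProductSpace ℂ H] [CompleteSpace H]

/-- Combined coefficient support. -/
def Sset (b F : OpCoeffs H) : Finset DyadicInterval := b.support ∪ F.support

/-- The products `B_J^* F_J`. -/
def Aop (b F : OpCoeffs H) (J : DyadicInterval) : H →L[ℂ] H :=
  ContinuousLinearMap.adjoint (b J) ∘L F J

/-- All strict ancestors of the combined support. -/
def Tset (b F : OpCoeffs H) : Finset DyadicInterval := (Sset b F).biUnion anc

lemma mem_Tset {b F : OpCoeffs H} {I J : DyadicInterval}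
    (hJ : J ∈ Sset b F) (hss : J.set ⊂ I.set) : I ∈ Tset b F :=
  Finset.mem_biUnion.2 ⟨J, hJ, mem_anc.2 hss⟩

lemma filter_empty_of_not_mem_Tset {b F : OpCoeffs H} {I : DyadicInterval}
    (hI : I ∉ Tset b F) :
    (Sset b F).filter (fun J => J.set ⊂ I.set) = ∅ := by
  rw [Finset.filter_eq_empty_iff]
  intro J hJ hss
  exact hI (mem_Tset hJ hss)

lemma adjoint_real_smul (r : ℝ) (A : H →L[ℂ] H) :
    ContinuousLinearMap.adjoint (r • A) = r • ContinuousLinearMap.adjoint A := by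
  have h1 : r • A = (r : ℂ) • A := (algebraMap_smul ℂ r A).symm
  have h2 : r • ContinuousLinearMap.adjoint A = (r : ℂ) • ContinuousLinearMap.adjoint A :=
    (algebraMap_smul ℂ r _).symm
  rw [h1, h2, ContinuousLinearMap.adjoint.map_smulₛₗ]
  congr 1
  exact Complex.conj_ofReal r

lemma sum_swap_anc {M : Type*} [AddCommMonoid M] (S : Finset DyadicInterval)
    (g : DyadicInterval → DyadicInterval → M) :
    ∑ J ∈ S, ∑ I ∈ anc J, g I J
      = ∑ I ∈ S.biUnion anc, ∑ J ∈ S.filter (fun J => J.set ⊂ I.set), g I J := by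
  have h1 : ∀ J ∈ S, ∑ I ∈ anc J, g I J
      = ∑ I ∈ S.biUnion anc, if J.set ⊂ I.set then g I J else 0 := by
    intro J hJ
    rw [← Finset.sum_filter]
    congr 1
    ext I
    rw [Finset.mem_filter, Finset.mem_biUnion]
    constructor
    · intro h
      exact ⟨⟨J, hJ, h⟩, mem_anc.1 h⟩
    · rintro ⟨_, h⟩
      exact mem_anc.2 h
  rw [Finset.sum_congr rfl h1, Finset.sum_comm]
  exact Finset.sum_congr rfl (fun I _ => (Finset.sum_filter _ _).symm)

lemma haarCoeff_para (b : OpCoeffs H) (f : ℝ → H) (I : DyadicInterval) :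
    haarCoeff (para b f) I = (b I) (avg f I) := by
  unfold para
  rw [haarCoeff_haar_sum]
  by_cases h : I ∈ b.support
  · rw [if_pos h]
  · rw [if_neg h, Finsupp.notMem_support_iff.1 h]
    simp

lemma haarCoeff_DeltaBil (b F : OpCoeffs H) (I : DyadicInterval) :
    haarCoeff (DeltaBil b F) I
      = ∑ J ∈ (Sset b F).filter (fun J => J.set ⊂ I.set), hsign I J • Aop b F J := by
  unfold DeltaBil
  rw [haarCoeff_indlen_sum]
  rfl

lemma adjoint_haarCoeff_DeltaBil (b F : OpCoeffs H) (I : DyadicInterval) :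
    ContinuousLinearMap.adjoint (haarCoeff (DeltaBil F b) I)
      = ∑ J ∈ (Sset b F).filter (fun J => J.set ⊂ I.set), hsign I J • Aop b F J := by
  have h := haarCoeff_DeltaBil F b I
  rw [h, map_sum (ContinuousLinearMap.adjoint (𝕜 := ℂ) (E := H) (F := H)) _ _]
  rw [show Sset F b = Sset b F from Finset.union_comm _ _]
  apply Finset.sum_congr rfl
  intro J _
  rw [adjoint_real_smul]
  congr 1
  unfold Aop
  rw [ContinuousLinearMap.adjoint_comp, ContinuousLinearMap.adjoint_adjoint]

lemma part1_pointwise (b F : OpCoeffs H) (f : ℝ → H)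
    (hf : Integrable f circleMeasure) (hmean : (∫ t, f t ∂circleMeasure) = 0)
    {t : ℝ} (ht : t ∈ Set.Ico (0:ℝ) 1) :
    delta (adjC b) (para F f) t =
      paraF (DeltaBil b F) f t + paraStarF (DeltaBil F b) f t + DopBil b F f t := by
  classical
  -- Left-hand side
  have hLHS : delta (adjC b) (para F f) t
      = ∑ J ∈ Sset b F, (J.len⁻¹ * J.ind t) • (Aop b F J) (avg f J) := by
    unfold delta
    rw [Finset.sum_subset
      (show (adjC b).support ⊆ Sset b F from
        Finset.Subset.trans Finsupp.support_mapRange Finset.subset_union_left)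
      (fun I _ hInot => by
        rw [Finsupp.notMem_support_iff.1 hInot]
        simp)]
    apply Finset.sum_congr rfl
    intro J _
    rw [show adjC b J = ContinuousLinearMap.adjoint (b J) from Finsupp.mapRange_apply,
      haarCoeff_para, Aop, ContinuousLinearMap.comp_apply]
  -- paraF term
  have hpara : paraF (DeltaBil b F) f t
      = ∑ I ∈ Tset b F, ∑ J ∈ (Sset b F).filter (fun J => J.set ⊂ I.set),
          (I.haar t * hsign I J) • (Aop b F J) (avg f I) := by
    unfold paraF
    rw [tsum_eq_sum (s := Tset b F) (fun I hI => by
      rw [haarCoeff_DeltaBil, filter_empty_of_not_mem_Tset hI, Finset.sum_empty]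
      simp)]
    apply Finset.sum_congr rfl
    intro I _
    rw [haarCoeff_DeltaBil, ContinuousLinearMap.sum_apply, Finset.smul_sum]
    apply Finset.sum_congr rfl
    intro J _
    rw [ContinuousLinearMap.smul_apply, smul_smul]
  -- paraStarF term
  have hparaStar : paraStarF (DeltaBil F b) f t
      = ∑ I ∈ Tset b F, ∑ J ∈ (Sset b F).filter (fun J => J.set ⊂ I.set),
          (I.len⁻¹ * I.ind t * hsign I J) • (Aop b F J) (haarCoeff f I) := by
    unfold paraStarF
    rw [tsum_eq_sum (s := Tset b F) (fun I hI => by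
      rw [adjoint_haarCoeff_DeltaBil, filter_empty_of_not_mem_Tset hI, Finset.sum_empty]
      simp)]
    apply Finset.sum_congr rfl
    intro I _
    rw [adjoint_haarCoeff_DeltaBil, ContinuousLinearMap.sum_apply, Finset.smul_sum]
    apply Finset.sum_congr rfl
    intro J _
    rw [ContinuousLinearMap.smul_apply, smul_smul]
  -- DopBil term
  have hdop : DopBil b F f t
      = ∑ I ∈ Tset b F, ∑ J ∈ (Sset b F).filter (fun J => J.set ⊂ I.set),
          (I.haar t * I.len⁻¹) • (Aop b F J) (haarCoeff f I) := by
    unfold DopBil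
    rw [tsum_eq_sum (s := Tset b F) (fun I hI => by
      rw [show (b.support ∪ F.support).filter (fun J => J.set ⊂ I.set) = ∅ from
        filter_empty_of_not_mem_Tset hI]
      simp)]
    apply Finset.sum_congr rfl
    intro I _
    rw [show ((b.support ∪ F.support).filter (fun J => J.set ⊂ I.set))
      = ((Sset b F).filter (fun J => J.set ⊂ I.set)) from rfl]
    rw [ContinuousLinearMap.smul_apply, ContinuousLinearMap.sum_apply, Finset.smul_sum,
      Finset.smul_sum]
    apply Finset.sum_congr rfl
    intro J _
    rw [smul_smul]
    rfl
  -- main computation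
  rw [hLHS, hpara, hparaStar, hdop]
  have hmain : ∑ J ∈ Sset b F, (J.len⁻¹ * J.ind t) • (Aop b F J) (avg f J)
      = ∑ J ∈ Sset b F, ∑ I ∈ anc J,
          ((I.haar t * hsign I J) • (Aop b F J) (avg f I)
            + (I.len⁻¹ * I.ind t * hsign I J + I.haar t * I.len⁻¹)
                • (Aop b F J) (haarCoeff f I)) := by
    apply Finset.sum_congr rfl
    intro J _
    rw [← ContinuousLinearMap.map_smul_of_tower, telescope f hf hmean J.n J rfl t ht,
      map_add, map_sum, map_sum, ← Finset.sum_add_distrib]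
    apply Finset.sum_congr rfl
    intro I _
    rw [ContinuousLinearMap.map_smul_of_tower, ContinuousLinearMap.map_smul_of_tower]
  rw [hmain, sum_swap_anc]
  rw [← Finset.sum_add_distrib, ← Finset.sum_add_distrib]
  apply Finset.sum_congr rfl
  intro I _
  rw [← Finset.sum_add_distrib, ← Finset.sum_add_distrib]
  apply Finset.sum_congr rfl
  intro J _
  rw [add_smul]
  abel

end Part1

section Part2A
open DyadicInterval

variable {H : Type*} [NormedAddCommGroup H] [InnerProductSpace ℂ H] [CompleteSpace H]

local notation "⟪" x ", " y "⟫" => @inner ℂ _ _ x y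

lemma inner_real_smul_left' (r : ℝ) (x y : H) : ⟪r • x, y⟫ = (r:ℂ) * ⟪x, y⟫ := by
  rw [← algebraMap_smul ℂ r x, Complex.coe_algebraMap, inner_smul_left, Complex.conj_ofReal]

lemma inner_real_smul_right' (r : ℝ) (x y : H) : ⟪x, r • y⟫ = (r:ℂ) * ⟪x, y⟫ := by
  rw [← algebraMap_smul ℂ r y, Complex.coe_algebraMap, inner_smul_right]

lemma norm_sq_haar_sum_pointwise (T : Finset DyadicInterval) (v : DyadicInterval → H) (t : ℝ) :
    ‖∑ I ∈ T, I.haar t • v I‖^2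
      = ∑ I ∈ T, ∑ K ∈ T, (I.haar t * K.haar t) * (⟪v I, v K⟫).re := by
  have h0 : ‖∑ I ∈ T, I.haar t • v I‖^2
      = (⟪∑ I ∈ T, I.haar t • v I, ∑ I ∈ T, I.haar t • v I⟫).re :=
    (inner_self_eq_norm_sq (𝕜 := ℂ) _).symm
  rw [h0, sum_inner, Complex.re_sum]
  apply Finset.sum_congr rfl
  intro I _
  rw [inner_sum, Complex.re_sum]
  apply Finset.sum_congr rfl
  intro K _
  rw [inner_real_smul_left', inner_real_smul_right', ← mul_assoc, ← Complex.ofReal_mul]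
  simp

lemma integral_norm_sq_haar_sum (ν : Measure ℝ) [IsFiniteMeasure ν]
    (T : Finset DyadicInterval) (v : DyadicInterval → H)
    (horth : ∀ I ∈ T, ∀ K ∈ T, ∫ t, I.haar t * K.haar t ∂ν = if I = K then 1 else 0) :
    ∫ t, ‖∑ I ∈ T, I.haar t • v I‖^2 ∂ν = ∑ I ∈ T, ‖v I‖^2 := by
  rw [show (fun t => ‖∑ I ∈ T, I.haar t • v I‖^2) = fun t => ∑ I ∈ T, ∑ K ∈ T,
    (I.haar t * K.haar t) * (⟪v I, v K⟫).re from funext (norm_sq_haar_sum_pointwise T v)]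
  rw [integral_finset_sum _ (fun I _ => integrable_finset_sum _ (fun K _ =>
    (integrable_haar_mul_haar I K).mul_const _))]
  apply Finset.sum_congr rfl
  intro I hI
  rw [integral_finset_sum _ (fun K _ => (integrable_haar_mul_haar I K).mul_const _)]
  have h : ∀ K ∈ T, (∫ t, (I.haar t * K.haar t) * (⟪v I, v K⟫).re ∂ν)
      = if K = I then (⟪v I, v K⟫).re else 0 := by
    intro K hK
    rw [integral_mul_const, horth I hI K hK]
    by_cases h : I = K
    · rw [if_pos h, if_pos h.symm, one_mul]
    · rw [if_neg h, if_neg (fun hh => h hh.symm), zero_mul]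
  rw [Finset.sum_congr rfl h, Finset.sum_ite_eq' T I _, if_pos hI]
  exact inner_self_eq_norm_sq (𝕜 := ℂ) _

lemma integrable_haar_smul {ν : Measure ℝ} (I : DyadicInterval) (g : ℝ → H)
    (hg : Integrable g ν) : Integrable (fun t => I.haar t • g t) ν := by
  rw [show (fun t => I.haar t • g t) = fun t =>
      (Real.sqrt I.len)⁻¹ • (I.left.set.indicator g t - I.right.set.indicator g t) from
    funext (fun t => by rw [haar_smul, ind_smul, ind_smul])]
  exact ((hg.indicator I.left.measurableSet_set).sub
    (hg.indicator I.right.measurableSet_set)).smul _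

/-- Bessel's inequality for a finite piece of the Haar system. -/
lemma bessel (ν : Measure ℝ) [IsFiniteMeasure ν] (T : Finset DyadicInterval) (g : ℝ → H)
    (hg : Integrable g ν) (hg2 : Integrable (fun t => ‖g t‖^2) ν)
    (horth : ∀ I ∈ T, ∀ K ∈ T, ∫ t, I.haar t * K.haar t ∂ν = if I = K then 1 else 0) :
    ∑ I ∈ T, ‖∫ t, I.haar t • g t ∂ν‖^2 ≤ ∫ t, ‖g t‖^2 ∂ν := by
  classical
  set v : DyadicInterval → H := fun I => ∫ t, I.haar t • g t ∂ν with hv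
  have he : (fun t => (⟪∑ I ∈ T, I.haar t • v I, g t⟫).re)
      = fun t => ∑ I ∈ T, I.haar t * (⟪v I, g t⟫).re := by
    funext t
    rw [sum_inner, Complex.re_sum]
    apply Finset.sum_congr rfl
    intro I _
    rw [inner_real_smul_left']
    simp
  have hterm_int : ∀ I : DyadicInterval, Integrable (fun t => I.haar t * (⟪v I, g t⟫).re) ν := by
    intro I
    exact Integrable.bdd_mul (c := (Real.sqrt I.len)⁻¹)
      ((((RCLike.reCLM (K := ℂ))).comp
        ((innerSL ℂ (v I)).restrictScalars ℝ)).integrable_comp hg)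
      (measurable_haar I).aestronglyMeasurable
      (Filter.Eventually.of_forall fun t => by simpa using abs_haar_le I t)
  have hcross : ∀ I ∈ T, (∫ t, I.haar t * (⟪v I, g t⟫).re ∂ν) = ‖v I‖^2 := by
    intro I hI
    have h2 := ContinuousLinearMap.integral_comp_comm
      ((RCLike.reCLM (K := ℂ)).comp ((innerSL ℂ (v I)).restrictScalars ℝ))
      (integrable_haar_smul I g hg)
    have h3 : ∫ t, I.haar t * (⟪v I, g t⟫).re ∂ν
        = (⟪v I, ∫ t, I.haar t • g t ∂ν⟫).re := by simpa using h2
    rw [h3]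
    exact inner_self_eq_norm_sq (𝕜 := ℂ) _
  have hcross_total : ∫ t, (⟪∑ I ∈ T, I.haar t • v I, g t⟫).re ∂ν = ∑ I ∈ T, ‖v I‖^2 := by
    rw [he, integral_finset_sum _ (fun I _ => hterm_int I)]
    exact Finset.sum_congr rfl hcross
  have hinner_int : Integrable (fun t => (⟪∑ I ∈ T, I.haar t • v I, g t⟫).re) ν := by
    rw [he]
    exact integrable_finset_sum _ (fun I _ => hterm_int I)
  have hs2 : Integrable (fun t => ‖∑ I ∈ T, I.haar t • v I‖^2) ν := by
    rw [show (fun t => ‖∑ I ∈ T, I.haar t • v I‖^2) = fun t => ∑ I ∈ T, ∑ K ∈ T,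
      (I.haar t * K.haar t) * (⟪v I, v K⟫).re from funext (norm_sq_haar_sum_pointwise T v)]
    exact integrable_finset_sum _ (fun I _ => integrable_finset_sum _ (fun K _ =>
      (integrable_haar_mul_haar I K).mul_const _))
  have hsint : ∫ t, ‖∑ I ∈ T, I.haar t • v I‖^2 ∂ν = ∑ I ∈ T, ‖v I‖^2 :=
    integral_norm_sq_haar_sum ν T v horth
  have hkey : 0 ≤ ∫ t, ‖g t - ∑ I ∈ T, I.haar t • v I‖^2 ∂ν :=
    integral_nonneg (fun t => sq_nonneg _)
  have hexp : ∫ t, ‖g t - ∑ I ∈ T, I.haar t • v I‖^2 ∂ν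
      = (∫ t, ‖g t‖^2 ∂ν) - 2 * (∑ I ∈ T, ‖v I‖^2) + ∑ I ∈ T, ‖v I‖^2 := by
    have hpt : ∀ t, ‖g t - ∑ I ∈ T, I.haar t • v I‖^2
        = ‖g t‖^2 - 2 * (⟪∑ I ∈ T, I.haar t • v I, g t⟫).re
            + ‖∑ I ∈ T, I.haar t • v I‖^2 := by
      intro t
      rw [norm_sub_sq (𝕜 := ℂ)]
      have hsym : RCLike.re ⟪g t, (∑ I ∈ T, I.haar t • v I)⟫
          = (⟪∑ I ∈ T, I.haar t • v I, g t⟫).re := inner_re_symm (𝕜 := ℂ) _ _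
      rw [hsym]
    rw [show (fun t => ‖g t - ∑ I ∈ T, I.haar t • v I‖^2)
      = fun t => ‖g t‖^2 - 2 * (⟪∑ I ∈ T, I.haar t • v I, g t⟫).re
          + ‖∑ I ∈ T, I.haar t • v I‖^2 from funext hpt]
    have hmid2 : Integrable (fun t => 2 * (⟪∑ I ∈ T, I.haar t • v I, g t⟫).re) ν :=
      hinner_int.const_mul 2
    have hmid : Integrable
        (fun t => ‖g t‖^2 - 2 * (⟪∑ I ∈ T, I.haar t • v I, g t⟫).re) ν :=
      hg2.sub hmid2
    rw [integral_add hmid hs2, integral_sub hg2 hmid2, MeasureTheory.integral_const_mul,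
      hcross_total, hsint]
  rw [hexp] at hkey
  linarith

end Part2A

section Part2B
open DyadicInterval

variable {H : Type*} [NormedAddCommGroup H] [InnerProductSpace ℂ H] [CompleteSpace H]

local notation "⟪" x ", " y "⟫" => @inner ℂ _ _ x y

/-- The block-diagonal operators of `D_{B,F}`. -/
def TopOp (b F : OpCoeffs H) (I : DyadicInterval) : H →L[ℂ] H :=
  I.len⁻¹ • ∑ J ∈ (Sset b F).filter (fun J => J.set ⊂ I.set), Aop b F J

lemma Dop_repr (b F : OpCoeffs H) (f : ℝ → H) :
    DopBil b F f = fun t => ∑ I ∈ Tset b F, I.haar t • (TopOp b F I) (haarCoeff f I) := by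
  funext t
  unfold DopBil
  rw [tsum_eq_sum (s := Tset b F) (fun I hI => by
    rw [show (b.support ∪ F.support).filter (fun J => J.set ⊂ I.set) = ∅ from
      filter_empty_of_not_mem_Tset hI]
    simp)]
  rfl

lemma restrict_finite (I : DyadicInterval) : IsFiniteMeasure (volume.restrict I.set) := by
  constructor
  rw [Measure.restrict_apply_univ, I.volume_set]
  exact ENNReal.ofReal_lt_top

lemma Bfun_apply (F : OpCoeffs H) (x : H) (t : ℝ) :
    Bfun F t x = ∑ K ∈ F.support, K.haar t • ((F K) x) := by
  unfold Bfun
  rw [ContinuousLinearMap.sum_apply]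
  exact Finset.sum_congr rfl (fun K _ => rfl)

lemma aesm_Bfun_apply (F : OpCoeffs H) (x : H) (ν : Measure ℝ) :
    AEStronglyMeasurable (fun t => Bfun F t x) ν := by
  rw [show (fun t => Bfun F t x) = fun t => ∑ K ∈ F.support, K.haar t • ((F K) x) from
    funext (Bfun_apply F x)]
  exact Finset.aestronglyMeasurable_fun_sum _ (fun K _ =>
    ((measurable_haar K).aestronglyMeasurable).smul_const _)

lemma norm_Bfun_apply_le (F : OpCoeffs H) (x : H) (t : ℝ) :
    ‖Bfun F t x‖ ≤ ∑ K ∈ F.support, (Real.sqrt K.len)⁻¹ * ‖(F K) x‖ := by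
  rw [Bfun_apply]
  apply le_trans (norm_sum_le _ _)
  apply Finset.sum_le_sum
  intro K _
  rw [norm_smul, Real.norm_eq_abs]
  exact mul_le_mul_of_nonneg_right (abs_haar_le K t) (norm_nonneg _)

lemma integrable_Bfun_apply (F : OpCoeffs H) (x : H) (ν : Measure ℝ) [IsFiniteMeasure ν] :
    Integrable (fun t => Bfun F t x) ν := by
  apply Integrable.mono' (integrable_const (∑ K ∈ F.support, (Real.sqrt K.len)⁻¹ * ‖(F K) x‖))
    (aesm_Bfun_apply F x ν)
  exact Filter.Eventually.of_forall (norm_Bfun_apply_le F x)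

lemma integrable_norm_sq_of_bdd {ν : Measure ℝ} [IsFiniteMeasure ν] {g : ℝ → H}
    (hm : AEStronglyMeasurable g ν) {C : ℝ} (hC : ∀ t, ‖g t‖ ≤ C) :
    Integrable (fun t => ‖g t‖^2) ν := by
  apply Integrable.mono' (integrable_const (C^2))
    ((hm.norm.aemeasurable.pow_const 2).aestronglyMeasurable)
  apply Filter.Eventually.of_forall
  intro t
  have h0 := norm_nonneg (g t)
  rw [Real.norm_eq_abs, abs_of_nonneg (by positivity)]
  exact pow_le_pow_left₀ h0 (hC t) 2

/-- The Haar coefficients of the local mean-zero part of `t ↦ B(t) x`. -/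
lemma local_coeff (F : OpCoeffs H) (x : H) {I J : DyadicInterval} (hJI : J.set ⊆ I.set) :
    ∫ t, J.haar t • (Bfun F t x - avg (fun s => Bfun F s x) I) ∂(volume.restrict I.set)
      = (F J) x := by
  haveI := restrict_finite I
  have hG : Integrable (fun t => Bfun F t x) (volume.restrict I.set) :=
    integrable_Bfun_apply F x _
  have hsplit : (fun t => J.haar t • (Bfun F t x - avg (fun s => Bfun F s x) I))
      = fun t => J.haar t • Bfun F t x - J.haar t • (avg (fun s => Bfun F s x) I) := by
    funext t
    rw [smul_sub]
  rw [hsplit, integral_sub (integrable_haar_smul J _ hG)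
    ((integrable_haar J).smul_const _)]
  have hzero : ∫ t, J.haar t • (avg (fun s => Bfun F s x) I) ∂(volume.restrict I.set) = 0 := by
    rw [integral_smul_const,
      integral_restrict_of_support J.haar J.set I.set I.measurableSet_set
        (fun t ht => haar_zero_of_not_mem ht) hJI,
      integral_haar_volume, zero_smul]
  rw [hzero, sub_zero]
  have hsupp : ∀ t, t ∉ J.set → J.haar t • Bfun F t x = 0 := fun t ht => by
    rw [haar_zero_of_not_mem ht, zero_smul]
  rw [integral_restrict_of_support _ J.set I.set I.measurableSet_set hsupp hJI,
    ← integral_restrict_of_support (fun t => J.haar t • Bfun F t x) J.set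
      (Set.Ico (0:ℝ) 1) measurableSet_Ico hsupp J.set_subset_Ico]
  have : ∫ t, J.haar t • Bfun F t x ∂(volume.restrict (Set.Ico (0:ℝ) 1))
      = haarCoeff (fun t => Bfun F t x) J := by
    rw [haarCoeff, circleMeasure]
  rw [this,
    show (fun t => Bfun F t x) = fun t => ∑ K ∈ F.support, K.haar t • ((F K) x) from
      funext (Bfun_apply F x), haarCoeff_haar_sum]
  by_cases h : J ∈ F.support
  · rw [if_pos h]
  · rw [if_neg h, Finsupp.notMem_support_iff.1 h]
    simp

/-- Localized Bessel inequality against the BMO norm. -/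
lemma sq_sum_le_sbmo (F : OpCoeffs H) (I : DyadicInterval) (x : H) (hx : ‖x‖ = 1)
    (A : Finset DyadicInterval) (hA : ∀ J ∈ A, J.set ⊂ I.set) :
    ENNReal.ofReal (Real.sqrt (I.len⁻¹ * ∑ J ∈ A, ‖(F J) x‖^2)) ≤ sbmoNorm (Bfun F) := by
  haveI := restrict_finite I
  set c := avg (fun s => Bfun F s x) I with hc
  have hG : Integrable (fun t => Bfun F t x) (volume.restrict I.set) :=
    integrable_Bfun_apply F x _
  have hg : Integrable (fun t => Bfun F t x - c) (volume.restrict I.set) :=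
    hG.sub (integrable_const c)
  have hgm : AEStronglyMeasurable (fun t => Bfun F t x - c) (volume.restrict I.set) :=
    (aesm_Bfun_apply F x _).sub aestronglyMeasurable_const
  have hg2 : Integrable (fun t => ‖Bfun F t x - c‖^2) (volume.restrict I.set) := by
    apply integrable_norm_sq_of_bdd hgm
      (C := (∑ K ∈ F.support, (Real.sqrt K.len)⁻¹ * ‖(F K) x‖) + ‖c‖)
    intro t
    apply le_trans (norm_sub_le _ _)
    exact add_le_add_left (norm_Bfun_apply_le F x t) _
  have hb := bessel (volume.restrict I.set) A (fun t => Bfun F t x - c) hg hg2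
    (fun J hJ K hK => integral_haar_mul_haar_restrict (hA J hJ).subset)
  rw [Finset.sum_congr rfl (fun J hJ => by
    rw [local_coeff F x (hA J hJ).subset])] at hb
  have hb' : ∑ J ∈ A, ‖(F J) x‖^2 ≤ ∫ t in I.set, ‖Bfun F t x - c‖^2 := hb
  have hnn : (0:ℝ) ≤ I.len⁻¹ * ∫ t in I.set, ‖Bfun F t x - c‖^2 :=
    mul_nonneg (inv_nonneg.2 I.len_nonneg) (integral_nonneg (fun t => sq_nonneg _))
  have hmono : ENNReal.ofReal (Real.sqrt (I.len⁻¹ * ∑ J ∈ A, ‖(F J) x‖^2))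
      ≤ ENNReal.ofReal (I.len⁻¹ * ∫ t in I.set, ‖Bfun F t x - c‖^2) ^ (1/2:ℝ) := by
    rw [ENNReal.ofReal_rpow_of_nonneg hnn (by norm_num), ← Real.sqrt_eq_rpow]
    apply ENNReal.ofReal_le_ofReal
    apply Real.sqrt_le_sqrt
    apply mul_le_mul_of_nonneg_left hb' (inv_nonneg.2 I.len_nonneg)
  apply le_trans hmono
  have h1 : ENNReal.ofReal (I.len⁻¹ * ∫ t in I.set, ‖Bfun F t x - c‖^2) ^ (1/2:ℝ)
      ≤ bmoNorm (fun t => Bfun F t x) :=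
    le_iSup (fun I' : DyadicInterval => ENNReal.ofReal
      (I'.len⁻¹ * ∫ t in I'.set, ‖Bfun F t x - avg (fun s => Bfun F s x) I'‖^2) ^ (1/2:ℝ)) I
  apply le_trans h1
  exact le_iSup (fun e : {e : H // ‖e‖ = 1} => bmoNorm fun t => Bfun F t e.1) ⟨x, hx⟩

end Part2B

section Part2C
open DyadicInterval

variable {H : Type*} [NormedAddCommGroup H] [InnerProductSpace ℂ H] [CompleteSpace H]

local notation "⟪" x ", " y "⟫" => @inner ℂ _ _ x y

lemma TopOp_inner_bound (b F : OpCoeffs H) (I : DyadicInterval) (x y : H)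
    (hx : ‖x‖ = 1) (hy : ‖y‖ = 1) :
    ENNReal.ofReal ((⟪(TopOp b F I) x, y⟫).re)
      ≤ sbmoNorm (Bfun b) * sbmoNorm (Bfun F) := by
  classical
  set A := (Sset b F).filter (fun J => J.set ⊂ I.set) with hA
  have hAmem : ∀ J ∈ A, J.set ⊂ I.set := fun J hJ => (Finset.mem_filter.1 hJ).2
  have h1 : (⟪(TopOp b F I) x, y⟫).re = I.len⁻¹ * ∑ J ∈ A, (⟪(F J) x, (b J) y⟫).re := by
    unfold TopOp
    rw [ContinuousLinearMap.smul_apply, inner_real_smul_left']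
    have h2 : (⟪(∑ J ∈ A, Aop b F J) x, y⟫).re = ∑ J ∈ A, (⟪(F J) x, (b J) y⟫).re := by
      rw [ContinuousLinearMap.sum_apply, sum_inner, Complex.re_sum]
      apply Finset.sum_congr rfl
      intro J _
      have h3 : ⟪(Aop b F J) x, y⟫ = ⟪(F J) x, (b J) y⟫ := by
        unfold Aop
        rw [ContinuousLinearMap.comp_apply]
        exact ContinuousLinearMap.adjoint_inner_left (b J) y ((F J) x)
      rw [h3]
    rw [show ((↑(I.len⁻¹):ℂ) * ⟪(∑ J ∈ A, Aop b F J) x, y⟫).re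
      = I.len⁻¹ * (⟪(∑ J ∈ A, Aop b F J) x, y⟫).re from by simp, h2]
  set SF := ∑ J ∈ A, ‖(F J) x‖^2 with hSFd
  set SB := ∑ J ∈ A, ‖(b J) y‖^2 with hSBd
  have hSF : 0 ≤ SF := Finset.sum_nonneg (fun _ _ => sq_nonneg _)
  have hSB : 0 ≤ SB := Finset.sum_nonneg (fun _ _ => sq_nonneg _)
  have hlen : 0 ≤ I.len⁻¹ := inv_nonneg.2 I.len_nonneg
  have h2 : I.len⁻¹ * ∑ J ∈ A, (⟪(F J) x, (b J) y⟫).re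
      ≤ Real.sqrt (I.len⁻¹ * SF) * Real.sqrt (I.len⁻¹ * SB) := by
    have hstep : ∑ J ∈ A, (⟪(F J) x, (b J) y⟫).re ≤ ∑ J ∈ A, ‖(F J) x‖ * ‖(b J) y‖ :=
      Finset.sum_le_sum (fun J _ => re_inner_le_norm (𝕜 := ℂ) _ _)
    have hab : 0 ≤ ∑ J ∈ A, ‖(F J) x‖ * ‖(b J) y‖ :=
      Finset.sum_nonneg (fun J _ => mul_nonneg (norm_nonneg _) (norm_nonneg _))
    have hcs : (∑ J ∈ A, ‖(F J) x‖ * ‖(b J) y‖)^2 ≤ SF * SB :=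
      Finset.sum_mul_sq_le_sq_mul_sq A (fun J => ‖(F J) x‖) (fun J => ‖(b J) y‖)
    have hsq : ∑ J ∈ A, ‖(F J) x‖ * ‖(b J) y‖ ≤ Real.sqrt (SF * SB) := by
      rw [show ∑ J ∈ A, ‖(F J) x‖ * ‖(b J) y‖
        = Real.sqrt ((∑ J ∈ A, ‖(F J) x‖ * ‖(b J) y‖)^2) from (Real.sqrt_sq hab).symm]
      exact Real.sqrt_le_sqrt hcs
    have e3 : Real.sqrt (I.len⁻¹ * SF) * Real.sqrt (I.len⁻¹ * SB)
        = I.len⁻¹ * Real.sqrt (SF * SB) := by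
      rw [← Real.sqrt_mul (mul_nonneg hlen hSF),
        show I.len⁻¹ * SF * (I.len⁻¹ * SB) = (I.len⁻¹ * I.len⁻¹) * (SF * SB) from by ring,
        Real.sqrt_mul (mul_nonneg hlen hlen), Real.sqrt_mul_self hlen]
    rw [e3]
    calc I.len⁻¹ * ∑ J ∈ A, (⟪(F J) x, (b J) y⟫).re
        ≤ I.len⁻¹ * ∑ J ∈ A, ‖(F J) x‖ * ‖(b J) y‖ := mul_le_mul_of_nonneg_left hstep hlen
      _ ≤ I.len⁻¹ * Real.sqrt (SF * SB) := mul_le_mul_of_nonneg_left hsq hlen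
  rw [h1]
  calc ENNReal.ofReal (I.len⁻¹ * ∑ J ∈ A, (⟪(F J) x, (b J) y⟫).re)
      ≤ ENNReal.ofReal (Real.sqrt (I.len⁻¹ * SF) * Real.sqrt (I.len⁻¹ * SB)) :=
        ENNReal.ofReal_le_ofReal h2
    _ = ENNReal.ofReal (Real.sqrt (I.len⁻¹ * SB)) * ENNReal.ofReal (Real.sqrt (I.len⁻¹ * SF)) := by
        rw [ENNReal.ofReal_mul (Real.sqrt_nonneg _), mul_comm]
    _ ≤ sbmoNorm (Bfun b) * sbmoNorm (Bfun F) := by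
        apply mul_le_mul'
        · exact sq_sum_le_sbmo b I y hy A hAmem
        · exact sq_sum_le_sbmo F I x hx A hAmem

lemma TopOp_apply_bound (b F : OpCoeffs H) (I : DyadicInterval) (z : H) :
    ENNReal.ofReal ‖(TopOp b F I) z‖
      ≤ sbmoNorm (Bfun b) * sbmoNorm (Bfun F) * ENNReal.ofReal ‖z‖ := by
  by_cases hz : z = 0
  · subst hz
    rw [map_zero]
    simp
  · have hzn : ‖z‖ ≠ 0 := norm_ne_zero_iff.2 hz
    set x : H := ‖z‖⁻¹ • z with hxdef
    have hx : ‖x‖ = 1 := norm_smul_inv_norm hz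
    have hzx : z = ‖z‖ • x := by
      rw [hxdef, smul_smul, mul_inv_cancel₀ hzn, one_smul]
    have hTz : (TopOp b F I) z = ‖z‖ • (TopOp b F I) x := by
      conv_lhs => rw [hzx]
      rw [ContinuousLinearMap.map_smul_of_tower]
    by_cases hw : (TopOp b F I) x = 0
    · rw [hTz, hw, smul_zero]
      simp
    · have hwn : ‖(TopOp b F I) x‖ ≠ 0 := norm_ne_zero_iff.2 hw
      set w := (TopOp b F I) x with hwdef
      set y : H := ‖w‖⁻¹ • w with hydef
      have hy : ‖y‖ = 1 := norm_smul_inv_norm hw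
      have hre : (⟪(TopOp b F I) x, y⟫).re = ‖w‖ := by
        rw [← hwdef, hydef, inner_real_smul_right']
        rw [show ((↑(‖w‖⁻¹):ℂ) * ⟪w, w⟫).re = ‖w‖⁻¹ * (⟪w, w⟫).re from by simp,
          show (⟪w, w⟫).re = ‖w‖^2 from inner_self_eq_norm_sq (𝕜 := ℂ) w, sq]
        field_simp
      have hb := TopOp_inner_bound b F I x y hx hy
      rw [hre] at hb
      rw [hTz, norm_smul, Real.norm_eq_abs, abs_of_nonneg (norm_nonneg z),
        ENNReal.ofReal_mul (norm_nonneg z), mul_comm (ENNReal.ofReal ‖z‖) _]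
      exact mul_le_mul' hb (le_refl _)

lemma memℒp_haar_sum (T : Finset DyadicInterval) (v : DyadicInterval → H) :
    MemLp (fun t => ∑ I ∈ T, I.haar t • v I) 2 circleMeasure := by
  apply MemLp.of_bound (Finset.aestronglyMeasurable_fun_sum _ (fun I _ =>
    ((measurable_haar I).aestronglyMeasurable).smul_const _))
    (∑ I ∈ T, (Real.sqrt I.len)⁻¹ * ‖v I‖)
  apply Filter.Eventually.of_forall
  intro t
  apply le_trans (norm_sum_le _ _)
  apply Finset.sum_le_sum
  intro I _
  rw [norm_smul, Real.norm_eq_abs]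
  exact mul_le_mul_of_nonneg_right (abs_haar_le I t) (norm_nonneg _)

lemma eLpNorm_haar_sum (T : Finset DyadicInterval) (v : DyadicInterval → H) :
    eLpNorm (fun t => ∑ I ∈ T, I.haar t • v I) 2 circleMeasure
      = ENNReal.ofReal (Real.sqrt (∑ I ∈ T, ‖v I‖^2)) := by
  rw [(memℒp_haar_sum T v).eLpNorm_eq_integral_rpow_norm (by norm_num) (by norm_num)]
  congr 1
  have htr : ((2:ℝ≥0∞)).toReal = (2:ℝ) := by norm_num
  rw [htr]
  have hint : (∫ t, ‖∑ I ∈ T, I.haar t • v I‖ ^ (2:ℝ) ∂circleMeasure)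
      = ∑ I ∈ T, ‖v I‖^2 := by
    rw [show (fun t => ‖∑ I ∈ T, I.haar t • v I‖ ^ (2:ℝ))
      = fun t => ‖∑ I ∈ T, I.haar t • v I‖^2 from funext (fun t => by
        rw [show (2:ℝ) = ((2:ℕ):ℝ) from by norm_num, Real.rpow_natCast])]
    exact integral_norm_sq_haar_sum circleMeasure T v
      (fun I _ K _ => integral_haar_mul_haar I K)
  rw [hint, Real.sqrt_eq_rpow, show (1/2:ℝ) = (2:ℝ)⁻¹ from by norm_num]

lemma integral_norm_sq_le_one (f : ℝ → H) (hf : MemLp f 2 circleMeasure)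
    (hnorm : eLpNorm f 2 circleMeasure ≤ 1) : ∫ t, ‖f t‖^2 ∂circleMeasure ≤ 1 := by
  rw [hf.eLpNorm_eq_integral_rpow_norm (by norm_num) (by norm_num)] at hnorm
  have htr : ((2:ℝ≥0∞)).toReal = (2:ℝ) := by norm_num
  rw [htr] at hnorm
  rw [show (fun a => ‖f a‖ ^ (2:ℝ)) = fun a => ‖f a‖^2 from funext (fun a => by
    rw [show (2:ℝ) = ((2:ℕ):ℝ) from by norm_num, Real.rpow_natCast])] at hnorm
  rw [ENNReal.ofReal_le_one] at hnorm
  have hQ : 0 ≤ ∫ t, ‖f t‖^2 ∂circleMeasure := integral_nonneg (fun t => sq_nonneg _)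
  have h2 : Real.sqrt (∫ t, ‖f t‖^2 ∂circleMeasure) ≤ 1 := by
    rw [Real.sqrt_eq_rpow, show (1/2:ℝ) = (2:ℝ)⁻¹ from by norm_num]
    exact hnorm
  nlinarith [Real.sq_sqrt hQ, Real.sqrt_nonneg (∫ t, ‖f t‖^2 ∂circleMeasure)]

lemma part2_final (b F : OpCoeffs H) :
    l2NormOp (DopBil b F) ≤ sbmoNorm (Bfun b) * sbmoNorm (Bfun F) := by
  unfold l2NormOp
  apply iSup_le
  rintro ⟨f, hf, hmean, hnorm⟩
  have hfi : Integrable f circleMeasure := hf.integrable (by norm_num)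
  have hfi2 : Integrable (fun t => ‖f t‖^2) circleMeasure := by
    have h := hf.integrable_norm_rpow (by norm_num) (by norm_num)
    simpa [Real.rpow_natCast] using h
  have hbes := bessel circleMeasure (Tset b F) f hfi hfi2
    (fun I _ K _ => integral_haar_mul_haar I K)
  have hone : ∑ I ∈ Tset b F, ‖haarCoeff f I‖^2 ≤ 1 :=
    le_trans hbes (integral_norm_sq_le_one f hf hnorm)
  have hrepr : eLpNorm (DopBil b F f) 2 circleMeasure
      = ENNReal.ofReal (Real.sqrt (∑ I ∈ Tset b F, ‖(TopOp b F I) (haarCoeff f I)‖^2)) := by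
    rw [Dop_repr, eLpNorm_haar_sum]
  show eLpNorm (DopBil b F f) 2 circleMeasure ≤ _
  rw [hrepr]
  have hstep : ∀ I ∈ Tset b F,
      ENNReal.ofReal (‖(TopOp b F I) (haarCoeff f I)‖^2)
        ≤ (sbmoNorm (Bfun b) * sbmoNorm (Bfun F))^2
            * ENNReal.ofReal (‖haarCoeff f I‖^2) := by
    intro I _
    have h := TopOp_apply_bound b F I (haarCoeff f I)
    calc ENNReal.ofReal (‖(TopOp b F I) (haarCoeff f I)‖^2)
        = (ENNReal.ofReal ‖(TopOp b F I) (haarCoeff f I)‖)^2 :=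
          (ENNReal.ofReal_pow (norm_nonneg _) 2)
      _ ≤ (sbmoNorm (Bfun b) * sbmoNorm (Bfun F) * ENNReal.ofReal ‖haarCoeff f I‖)^2 := by
          rw [pow_two, pow_two]
          exact mul_le_mul' h h
      _ = (sbmoNorm (Bfun b) * sbmoNorm (Bfun F))^2
            * ENNReal.ofReal (‖haarCoeff f I‖^2) := by
          rw [mul_pow, ENNReal.ofReal_pow (norm_nonneg _)]
  calc ENNReal.ofReal (Real.sqrt (∑ I ∈ Tset b F, ‖(TopOp b F I) (haarCoeff f I)‖^2))
      = (ENNReal.ofReal (∑ I ∈ Tset b F, ‖(TopOp b F I) (haarCoeff f I)‖^2)) ^ (1/2:ℝ) := by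
        rw [Real.sqrt_eq_rpow, ← ENNReal.ofReal_rpow_of_nonneg
          (Finset.sum_nonneg fun _ _ => sq_nonneg _) (by norm_num)]
    _ = (∑ I ∈ Tset b F, ENNReal.ofReal (‖(TopOp b F I) (haarCoeff f I)‖^2)) ^ (1/2:ℝ) := by
        rw [ENNReal.ofReal_sum_of_nonneg (fun _ _ => sq_nonneg _)]
    _ ≤ (∑ I ∈ Tset b F, (sbmoNorm (Bfun b) * sbmoNorm (Bfun F))^2
          * ENNReal.ofReal (‖haarCoeff f I‖^2)) ^ (1/2:ℝ) :=
        ENNReal.rpow_le_rpow (Finset.sum_le_sum hstep) (by norm_num)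
    _ = ((sbmoNorm (Bfun b) * sbmoNorm (Bfun F))^2
          * ∑ I ∈ Tset b F, ENNReal.ofReal (‖haarCoeff f I‖^2)) ^ (1/2:ℝ) := by
        rw [Finset.mul_sum]
    _ = ((sbmoNorm (Bfun b) * sbmoNorm (Bfun F))^2
          * ENNReal.ofReal (∑ I ∈ Tset b F, ‖haarCoeff f I‖^2)) ^ (1/2:ℝ) := by
        rw [ENNReal.ofReal_sum_of_nonneg (fun _ _ => sq_nonneg _)]
    _ ≤ ((sbmoNorm (Bfun b) * sbmoNorm (Bfun F))^2 * 1) ^ (1/2:ℝ) := by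
        apply ENNReal.rpow_le_rpow ?_ (by norm_num)
        exact mul_le_mul' (le_refl _) (ENNReal.ofReal_le_one.2 hone)
    _ = sbmoNorm (Bfun b) * sbmoNorm (Bfun F) := by
        rw [mul_one, ← ENNReal.rpow_natCast (sbmoNorm (Bfun b) * sbmoNorm (Bfun F)) 2,
          ← ENNReal.rpow_mul]
        norm_num

end Part2C

end Aux

/-- `π_B^* π_F = π_{Δ(B,F)} + (π_{Δ(F,B)})^* + D_{B,F}`, with
`‖D_{B,F}‖ ≤ sup_{‖e‖=1} ‖B_e‖_{BMO(H)} ⬝ sup_{‖e‖=1} ‖F_e‖_{BMO(H)}`. -/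
theorem paraAdj_para_bilinear {H : Type*} [NormedAddCommGroup H] [InnerProductSpace ℂ H] [CompleteSpace H] (b F : OpCoeffs H) :
    (∀ f : ℝ → H, MemLp f 2 circleMeasure → (∫ t, f t ∂circleMeasure) = 0 →
      ∀ᵐ t ∂circleMeasure,
        delta (adjC b) (para F f) t =
          paraF (DeltaBil b F) f t + paraStarF (DeltaBil F b) f t + DopBil b F f t) ∧
    l2NormOp (DopBil b F) ≤ sbmoNorm (Bfun b) * sbmoNorm (Bfun F) := by
  constructor
  · intro f hf hmean
    have hfi : Integrable f circleMeasure := hf.integrable (by norm_num)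
    have hae : ∀ᵐ t ∂circleMeasure, t ∈ Set.Ico (0:ℝ) 1 := by
      rw [circleMeasure]
      exact MeasureTheory.ae_restrict_mem measurableSet_Ico
    filter_upwards [hae] with t ht
    exact part1_pointwise b F f hfi hmean ht
  · exact part2_final b F
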